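/- arXiv:1802.03204 — 8 statements merged into one kernel-verified Lean document; each statement's English description precedes it below -/
import Mathlib

section
/- Let W be a 3-dimensional complex linear subspace of the space of symmetric 3×3 matrices with complex entries (equivalently, of quadratic forms on ℂ³). If W contains an invertible matrix (i.e., a non-degenerate quadratic form), then there exists a vector v ∈ ℂ³ such that for every M ∈ W with M ≠ 0 one has M · v ≠ 0; that is, v is not in the kernel of any nonzero quadratic form in W. -/
open Module Matrix

lemma sqrt_exists (d : ℂ) : ∃ s : ℂ, s * s = d := by
  obtain ⟨z, hz⟩ := IsAlgClosed.exists_pow_nat_eq d (n := 2) (by norm_num)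
  exact ⟨z, by rw [← hz]; ring⟩

lemma congr_one (M₀ : Matrix (Fin 3) (Fin 3) ℂ) (hs : M₀.IsSymm) (hu : IsUnit M₀) :
    ∃ S : Matrix (Fin 3) (Fin 3) ℂ, IsUnit S.det ∧ Sᵀ * M₀ * S = 1 := by
  have hdet : IsUnit M₀.det := (Matrix.isUnit_iff_isUnit_det M₀).mp hu
  set B := Matrix.toBilin' M₀ with hB
  have hBsymm : B.IsSymm := by
    refine LinearMap.BilinForm.isSymm_iff.mpr (LinearMap.isSymm_def.mpr fun x y => ?_)
    rw [Matrix.toBilin'_apply, Matrix.toBilin'_apply]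
    simp only [RingHom.id_apply]
    rw [Finset.sum_comm]
    refine Finset.sum_congr rfl fun i _ => Finset.sum_congr rfl fun j _ => ?_
    rw [hs.apply j i]; ring
  obtain ⟨w0, hw0⟩ := LinearMap.BilinForm.exists_orthogonal_basis (LinearMap.BilinForm.isSymm_iff.mp hBsymm)
  have hfr : finrank ℂ (Fin 3 → ℂ) = 3 := finrank_fin_fun ℂ
  let w : Basis (Fin 3) ℂ (Fin 3 → ℂ) := w0.reindex (finCongr hfr)
  have hw : ∀ i j : Fin 3, i ≠ j → B (w i) (w j) = 0 := by
    intro i j hij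
    have : w i = w0 ((finCongr hfr).symm i) := Module.Basis.reindex_apply w0 (finCongr hfr) i
    have h2 : w j = w0 ((finCongr hfr).symm j) := Module.Basis.reindex_apply w0 (finCongr hfr) j
    rw [this, h2]
    exact hw0 (fun h => hij (by simpa using congrArg (finCongr hfr) h))
  have hd : ∀ i, B (w i) (w i) ≠ 0 := by
    intro i hzero
    have hall : ∀ y, B (w i) y = 0 := by
      intro y
      have := Basis.sum_repr w y
      rw [← this, map_sum]
      refine Finset.sum_eq_zero fun j _ => ?_
      rw [_root_.map_smul]
      rcases eq_or_ne i j with rfl | hij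
      · simp [hzero]
      · simp [hw i j hij]
    have hvm : Matrix.vecMul (w i) M₀ = 0 := by
      funext j
      have := hall (Pi.single j 1)
      rw [Matrix.toBilin'_apply'] at this
      simpa [dotProduct_single, Matrix.vecMul, dotProduct, Matrix.mulVec,
        Pi.single_apply, Finset.sum_ite_eq', Matrix.mul_apply, mul_comm] using this
    have : w i = 0 := by
      have h2 := congrArg (fun v => Matrix.vecMul v M₀⁻¹) hvm
      simpa [Matrix.vecMul_vecMul, Matrix.mul_nonsing_inv _ hdet] using h2
    exact Basis.ne_zero w i this
  choose s hs2 using fun i => sqrt_exists (B (w i) (w i))⁻¹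
  have hsne : ∀ i, s i ≠ 0 := by
    intro i h
    have := hs2 i
    rw [h, mul_zero] at this
    exact hd i (by simpa using (inv_eq_zero.mp this.symm))
  set S : Matrix (Fin 3) (Fin 3) ℂ := Matrix.of fun i j => s j * w j i with hSdef
  have hB3 : ∀ i j : Fin 3, B (w i) (w j) =
      w i 0 * M₀ 0 0 * w j 0 + w i 0 * M₀ 0 1 * w j 1 + w i 0 * M₀ 0 2 * w j 2 +
      (w i 1 * M₀ 1 0 * w j 0 + w i 1 * M₀ 1 1 * w j 1 + w i 1 * M₀ 1 2 * w j 2) +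
      (w i 2 * M₀ 2 0 * w j 0 + w i 2 * M₀ 2 1 * w j 1 + w i 2 * M₀ 2 2 * w j 2) := by
    intro i j
    rw [Matrix.toBilin'_apply]
    simp [Fin.sum_univ_three]
  have hmain : Sᵀ * M₀ * S = 1 := by
    ext i j
    have hentry : (Sᵀ * M₀ * S) i j =
        (s i * s j) * (B (w i) (w j)) := by
      rw [hB3]
      simp only [hSdef, Matrix.mul_apply, Fin.sum_univ_three, Matrix.transpose_apply,
        Matrix.of_apply]
      ring
    rcases eq_or_ne i j with rfl | hij
    · have hfact : s i * s i * B (w i) (w i) = 1 := by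
        rw [hs2 i]
        exact inv_mul_cancel₀ (hd i)
      rw [hentry, Matrix.one_apply_eq, mul_assoc] at *
      exact hfact
    · rw [hentry, hw i j hij, Matrix.one_apply_ne hij, mul_zero]
  refine ⟨S, ?_, hmain⟩
  have hdet2 := congrArg Matrix.det hmain
  rw [Matrix.det_mul, Matrix.det_mul, Matrix.det_transpose, Matrix.det_one] at hdet2
  exact IsUnit.of_mul_eq_one _ (show S.det * (M₀.det * S.det) = 1 by linear_combination hdet2)


open Module Matrix

lemma rep3 {V : Type*} [AddCommGroup V] [Module ℂ V] (M0 M1 M2 u : V) (c0 c1 c2 : ℂ)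
    (hu : u = c0•M0 + c1•M1 + c2•M2) (hc0 : c0 ≠ 0)
    (hind : ∀ g0 g1 g2 : ℂ, g0•M0 + g1•M1 + g2•M2 = 0 → g0 = 0 ∧ g1 = 0 ∧ g2 = 0) :
    (∀ x y z : ℂ, ∃ x' y' z' : ℂ, x•M0 + y•M1 + z•M2 = x'•u + y'•M1 + z'•M2) ∧
    (∀ x y z : ℂ, x•u + y•M1 + z•M2 = 0 → x = 0 ∧ y = 0 ∧ z = 0) := by
  constructor
  · intro x y z
    refine ⟨x/c0, y - x*c1/c0, z - x*c2/c0, ?_⟩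
    rw [hu]
    match_scalars <;> field_simp <;> ring
  · intro x y z h
    rw [hu] at h
    have h2 : (x*c0)•M0 + (x*c1 + y)•M1 + (x*c2 + z)•M2 = 0 := by
      rw [← h]; module
    obtain ⟨e0, e1, e2⟩ := hind _ _ _ h2
    have hx : x = 0 := by
      rcases mul_eq_zero.mp e0 with h' | h'
      · exact h'
      · exact absurd h' hc0
    refine ⟨hx, ?_, ?_⟩
    · rw [hx] at e1; simpa using e1
    · rw [hx] at e2; simpa using e2

lemma exists_AB (W' : Submodule ℂ (Matrix (Fin 3) (Fin 3) ℂ)) (h3 : finrank ℂ W' = 3)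
    (h1 : (1 : Matrix (Fin 3) (Fin 3) ℂ) ∈ W') :
    ∃ A B : Matrix (Fin 3) (Fin 3) ℂ, A ∈ W' ∧ B ∈ W' ∧
      (∀ M ∈ W', ∃ x y z : ℂ, M = x•(1:Matrix (Fin 3) (Fin 3) ℂ) + y•A + z•B) ∧
      (∀ x y z : ℂ, x•(1:Matrix (Fin 3) (Fin 3) ℂ) + y•A + z•B = 0 →
        x = 0 ∧ y = 0 ∧ z = 0) := by
  let b : Basis (Fin 3) ℂ W' := Module.finBasisOfFinrankEq ℂ W' h3
  set M0 : Matrix (Fin 3) (Fin 3) ℂ := (b 0 : Matrix (Fin 3) (Fin 3) ℂ) with hM0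
  set M1 : Matrix (Fin 3) (Fin 3) ℂ := (b 1 : Matrix (Fin 3) (Fin 3) ℂ) with hM1
  set M2 : Matrix (Fin 3) (Fin 3) ℂ := (b 2 : Matrix (Fin 3) (Fin 3) ℂ) with hM2
  have hspan0 : ∀ M ∈ W', ∃ x y z : ℂ, M = x•M0 + y•M1 + z•M2 := by
    intro M hM
    refine ⟨b.repr ⟨M, hM⟩ 0, b.repr ⟨M, hM⟩ 1, b.repr ⟨M, hM⟩ 2, ?_⟩
    have := b.sum_repr ⟨M, hM⟩
    rw [Fin.sum_univ_three] at this
    have h2 := congrArg (Subtype.val : W' → Matrix (Fin 3) (Fin 3) ℂ) this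
    simpa using h2.symm
  have hind0 : ∀ g0 g1 g2 : ℂ, g0•M0 + g1•M1 + g2•M2 = 0 → g0 = 0 ∧ g1 = 0 ∧ g2 = 0 := by
    intro g0 g1 g2 h
    have hsum : g0 • b 0 + g1 • b 1 + g2 • b 2 = (0 : W') := by
      apply Subtype.ext
      simpa using h
    have hli := Fintype.linearIndependent_iff.mp b.linearIndependent ![g0, g1, g2] (by
      rw [Fin.sum_univ_three]
      simpa using hsum)
    exact ⟨hli 0, hli 1, hli 2⟩
  obtain ⟨c0, c1, c2, hc⟩ := hspan0 1 h1
  by_cases hc0 : c0 = 0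
  · by_cases hc1 : c1 = 0
    · have hc2 : c2 ≠ 0 := by
        rintro rfl
        rw [hc0, hc1] at hc
        simp at hc
      obtain ⟨hspanR, hindR⟩ := rep3 M2 M0 M1 1 c2 c0 c1
        (by rw [hc]; module) hc2
        (fun g0 g1 g2 h => by
          obtain ⟨e1, e2, e0⟩ := hind0 g1 g2 g0 (by rw [← h]; module)
          exact ⟨e0, e1, e2⟩)
      refine ⟨M0, M1, (b 0).2, (b 1).2, ?_, ?_⟩
      · intro M hM
        obtain ⟨x, y, z, hxyz⟩ := hspan0 M hM
        obtain ⟨x', y', z', he⟩ := hspanR z x y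
        exact ⟨x', y', z', by rw [hxyz, ← show z•M2 + x•M0 + y•M1 = x•M0+y•M1+z•M2 by module, he]⟩
      · intro x y z h
        exact hindR x y z h
    · obtain ⟨hspanR, hindR⟩ := rep3 M1 M0 M2 1 c1 c0 c2
        (by rw [hc]; module) hc1
        (fun g0 g1 g2 h => by
          obtain ⟨e1, e0, e2⟩ := hind0 g1 g0 g2 (by rw [← h]; module)
          exact ⟨e0, e1, e2⟩)
      refine ⟨M0, M2, (b 0).2, (b 2).2, ?_, ?_⟩
      · intro M hM
        obtain ⟨x, y, z, hxyz⟩ := hspan0 M hM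
        obtain ⟨x', y', z', he⟩ := hspanR y x z
        exact ⟨x', y', z', by rw [hxyz, ← show y•M1 + x•M0 + z•M2 = x•M0+y•M1+z•M2 by module, he]⟩
      · intro x y z h
        exact hindR x y z h
  · obtain ⟨hspanR, hindR⟩ := rep3 M0 M1 M2 1 c0 c1 c2 hc hc0 hind0
    refine ⟨M1, M2, (b 1).2, (b 2).2, ?_, ?_⟩
    · intro M hM
      obtain ⟨x, y, z, hxyz⟩ := hspan0 M hM
      obtain ⟨x', y', z', he⟩ := hspanR x y z
      exact ⟨x', y', z', by rw [hxyz, he]⟩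
    · intro x y z h
      exact hindR x y z h

set_option maxHeartbeats 4000000 in
theorem key0 (a00 a01 a02 a11 a12 a22 b00 b01 b02 b11 b12 b22 : ℂ)
    (hc0 : ∀ x y z : ℂ, -a22*b12*x*x*z*z - a22*b11*x*x*y*z + a22*b02*x*y*z*z + a22*b01*x*y*y*z - a22*b01*x*x*x*z + a22*b00*x*x*y*z + a12*b22*x*x*z*z - a12*b11*x*x*y*y - a12*b02*x*z*z*z + a12*b02*x*y*y*z + a12*b02*x*x*x*z - a12*b01*x*y*z*z + a12*b01*x*y*y*y - a12*b01*x*x*x*y - a12*b00*x*x*z*z + a12*b00*x*x*y*y + a11*b22*x*x*y*z + a11*b12*x*x*y*y - a11*b02*x*y*z*z + a11*b02*x*x*x*y - a11*b01*x*y*y*z - a11*b00*x*x*y*z - a02*b22*x*y*z*z + a02*b12*x*z*z*z - a02*b12*x*y*y*z - a02*b12*x*x*x*z + a02*b11*x*y*z*z - a02*b11*x*x*x*y + a02*b01*x*x*z*z + a02*b01*x*x*y*y - a02*b01*x*x*x*x + a02*b00*x*x*x*y - a01*b22*x*y*y*z + a01*b22*x*x*x*z + a01*b12*x*y*z*z -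 a01*b12*x*y*y*y + a01*b12*x*x*x*y + a01*b11*x*y*y*z - a01*b02*x*x*z*z - a01*b02*x*x*y*y + a01*b02*x*x*x*x - a01*b00*x*x*x*z - a00*b22*x*x*y*z + a00*b12*x*x*z*z - a00*b12*x*x*y*y + a00*b11*x*x*y*z - a00*b02*x*x*x*y + a00*b01*x*x*x*z = 0)
    :
    ∃ r s t : ℂ, ¬(r = 0 ∧ s = 0 ∧ t = 0) ∧
      r + s*a00 + t*b00 = 0 ∧ s*a01 + t*b01 = 0 ∧ s*a02 + t*b02 = 0 ∧
      r + s*a11 + t*b11 = 0 ∧ s*a12 + t*b12 = 0 ∧ r + s*a22 + t*b22 = 0 := by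
  have g0 : -a12*b01 + a11*b02 - a02*b11 + a02*b00 + a01*b12 - a00*b02 = 0 := by linear_combination ((-1)/12) * (hc0 1 1 1) + ((11)/4) * (hc0 1 1 2) + ((-7)/4) * (hc0 1 1 3) + ((-1)/4) * (hc0 1 1 (-1)) + ((11)/4) * (hc0 1 2 1) + ((-19)/3) * (hc0 1 2 2) + ((13)/4) * (hc0 1 2 3) + ((1)/4) * (hc0 1 2 (-1)) + ((-13)/8) * (hc0 1 3 1) + ((25)/8) * (hc0 1 3 2) + ((-3)/2) * (hc0 1 3 3) + ((-9)/8) * (hc0 1 (-1) 1) + ((11)/24) * (hc0 1 (-1) 2) + ((1)/12) * (hc0 1 (-2) 1)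
  have g1 : -a12*b11 + a12*b00 + a11*b12 + a02*b01 - a01*b02 - a00*b12 = 0 := by linear_combination ((-13)/12) * (hc0 1 1 1) + ((1)/2) * (hc0 1 1 3) + ((7)/12) * (hc0 1 2 1) + (1) * (hc0 1 2 2) + (-1) * (hc0 1 2 3) + ((1)/8) * (hc0 1 3 1) + ((-3)/4) * (hc0 1 3 2) + ((1)/2) * (hc0 1 3 3) + ((7)/24) * (hc0 1 (-1) 1) + ((-1)/4) * (hc0 1 (-1) 2) + ((1)/12) * (hc0 1 (-2) 1)
  have g2 : -a02*b01 + a01*b02 = 0 := by linear_combination (2) * (hc0 1 1 1) + (-3) * (hc0 1 1 2) + ((27)/20) * (hc0 1 1 3) + ((3)/4) * (hc0 1 1 (-1)) + ((-1)/10) * (hc0 1 1 (-2)) + (-3) * (hc0 1 2 1) + (5) * (hc0 1 2 2) + ((-9)/4) * (hc0 1 2 3) + ((-1)/4) * (hc0 1 2 (-1)) + ((27)/20) * (hc0 1 3 1) + ((-9)/4) * (hc0 1 3 2) + (1) * (hc0 1 3 3) + ((3)/4) * (hc0 1 (-1) 1) + ((-1)/4) * (hc0 1 (-1) 2) + ((-1)/10)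 * (hc0 1 (-2) 1)
  have g3 : -a22*b01 + a12*b02 - a02*b12 + a01*b22 - a01*b00 + a00*b01 = 0 := by linear_combination ((-1)/12) * (hc0 1 1 1) + ((11)/4) * (hc0 1 1 2) + ((-13)/8) * (hc0 1 1 3) + ((-9)/8) * (hc0 1 1 (-1)) + ((1)/12) * (hc0 1 1 (-2)) + ((11)/4) * (hc0 1 2 1) + ((-19)/3) * (hc0 1 2 2) + ((25)/8) * (hc0 1 2 3) + ((11)/24) * (hc0 1 2 (-1)) + ((-7)/4) * (hc0 1 3 1) + ((13)/4) * (hc0 1 3 2) + ((-3)/2) * (hc0 1 3 3) + ((-1)/4) * (hc0 1 (-1) 1) + ((1)/4) * (hc0 1 (-1) 2)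
  have g4 : a12*b01 - a01*b12 = 0 := by linear_combination ((1)/12) * (hc0 1 1 1) + ((-1)/4) * (hc0 1 1 2) + ((-1)/4) * (hc0 1 2 1) + ((1)/3) * (hc0 1 2 2) + ((1)/8) * (hc0 1 3 1) + ((-1)/8) * (hc0 1 3 2) + ((1)/8) * (hc0 1 (-1) 1) + ((1)/24) * (hc0 1 (-1) 2) + ((-1)/12) * (hc0 1 (-2) 1)
  have g5 : a22*b01 + a12*b02 - a11*b01 - a02*b12 - a01*b22 + a01*b11 = 0 := by linear_combination ((1)/4) * (hc0 1 1 1) + ((1)/2) * (hc0 1 1 2) + ((-3)/4) * (hc0 1 1 3) + ((1)/2) * (hc0 1 2 1) + (-2) * (hc0 1 2 2) + ((3)/2) * (hc0 1 2 3) + ((-1)/2) * (hc0 1 3 1) + ((5)/4) * (hc0 1 3 2) + ((-3)/4) * (hc0 1 3 3) + ((-1)/4) * (hc0 1 (-1) 1) + ((1)/4) * (hc0 1 (-1) 2)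
  have g6 : -a22*b11 + a22*b00 + a11*b22 - a11*b00 - a00*b22 + a00*b11 = 0 := by linear_combination ((3)/4) * (hc0 1 1 1) + ((-43)/12) * (hc0 1 1 2) + ((19)/8) * (hc0 1 1 3) + ((11)/24) * (hc0 1 1 (-1)) + ((-43)/12) * (hc0 1 2 1) + ((26)/3) * (hc0 1 2 2) + ((-37)/8) * (hc0 1 2 3) + ((-11)/24) * (hc0 1 2 (-1)) + ((19)/8) * (hc0 1 3 1) + ((-37)/8) * (hc0 1 3 2) + ((9)/4) * (hc0 1 3 3) + ((11)/24) * (hc0 1 (-1) 1) + ((-11)/24) * (hc0 1 (-1) 2)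
  have g7 : a22*b02 - a12*b01 - a11*b02 - a02*b22 + a02*b11 + a01*b12 = 0 := by linear_combination ((1)/4) * (hc0 1 1 1) + ((1)/2) * (hc0 1 1 2) + ((-1)/2) * (hc0 1 1 3) + ((-1)/4) * (hc0 1 1 (-1)) + ((1)/2) * (hc0 1 2 1) + (-2) * (hc0 1 2 2) + ((5)/4) * (hc0 1 2 3) + ((1)/4) * (hc0 1 2 (-1)) + ((-3)/4) * (hc0 1 3 1) + ((3)/2) * (hc0 1 3 2) + ((-3)/4) * (hc0 1 3 3)
  have g8 : -a22*b12 + a12*b22 - a12*b00 + a02*b01 - a01*b02 + a00*b12 = 0 := by linear_combination ((-13)/12) * (hc0 1 1 1) + ((7)/12) * (hc0 1 1 2) + ((1)/8) * (hc0 1 1 3) + ((7)/24) * (hc0 1 1 (-1)) + ((1)/12) * (hc0 1 1 (-2)) + (1) * (hc0 1 2 2) + ((-3)/4) * (hc0 1 2 3) + ((-1)/4) * (hc0 1 2 (-1)) + ((1)/2) * (hc0 1 3 1) + (-1) * (hc0 1 3 2) + ((1)/2) * (hc0 1 3 3)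
  have m012 : -a02*b01 + a01*b02 = 0 := by
    have sq : (-a02*b01 + a01*b02) * (-a02*b01 + a01*b02) = 0 := by linear_combination (1) * (a01*b02) * g2 + (-1) * (a02*b01) * g2
    exact mul_self_eq_zero.mp sq
  have m013 : -a11*b01 + a01*b11 - a01*b00 + a00*b01 = 0 := by
    have sq : (-a11*b01 + a01*b11 - a01*b00 + a00*b01) * (-a11*b01 + a01*b11 - a01*b00 + a00*b01) = 0 := by linear_combination (-2) * (a01*b12) * g0 + (2) * (a01*b02) * g1 + (-2) * (a00*b12) * g2 + (2) * (a01*b02) * g2 + (2) * (a11*b12) * g2 + (1) * (a00*b01) * g3 + (-1) * (a01*b00) * g3 + (1) * (a01*b11) * g3 + (-1) * (a11*b01) * g3 + (-2) * (a00*b02) * g4 + (-2) * (a01*b12) * g4 + (2) * (a11*b02) * g4 + (1) * (a00*b01) * g5 + (-1) * (a01*b00) * g5 + (1) * (a01*b11) * g5 + (-1) * (a11*b01) * g5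
    exact mul_self_eq_zero.mp sq
  have m014 : -a12*b01 + a01*b12 = 0 := by
    have sq : (-a12*b01 + a01*b12) * (-a12*b01 + a01*b12) = 0 := by linear_combination (-1) * (a12*b01) * g0 + (1) * (a02*b01) * g1 + (-1) * (a00*b12) * g2 + (1) * (a02*b01) * g2 + (1) * (a11*b12) * g2 + (-1) * (a00*b02) * g4 + (-1) * (a01*b12) * g4 + (1) * (a11*b02) * g4
    exact mul_self_eq_zero.mp sq
  have m015 : -a22*b01 + a01*b22 - a01*b00 + a00*b01 = 0 := by
    have sq : (-a22*b01 + a01*b22 - a01*b00 + a00*b01) * (-a22*b01 + a01*b22 - a01*b00 + a00*b01) = 0 := by linear_combination (-1) * (a00*b12) * g2 + (1) * (a12*b00) * g2 + (-1) * (a12*b22) * g2 + (1) * (a22*b12) * g2 + (1) * (a00*b01) * g3 + (-1) * (a01*b00) * g3 + (1) * (a01*b22) * g3 + (-1) * (a22*b01) * g3 + (-1) * (a00*b02) * g4 + (1) * (a02*b00) * g4 + (-1) * (a02*b22) * g4 + (1) * (a22*b02) * g4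
    exact mul_self_eq_zero.mp sq
  have m023 : -a11*b02 + a02*b11 - a02*b00 + a00*b02 = 0 := by
    have sq : (-a11*b02 + a02*b11 - a02*b00 + a00*b02) * (-a11*b02 + a02*b11 - a02*b00 + a00*b02) = 0 := by linear_combination (-1) * (a00*b02) * g0 + (-1) * (a01*b12) * g0 + (1) * (a02*b00) * g0 + (-1) * (a02*b11) * g0 + (1) * (a11*b02) * g0 + (1) * (a02*b01) * g1 + (-1) * (a00*b12) * g2 + (1) * (a02*b01) * g2 + (1) * (a11*b12) * g2 + (-1) * (a00*b02) * g4 + (-1) * (a01*b12) * g4 + (1) * (a11*b02) * g4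
    exact mul_self_eq_zero.mp sq
  have m024 : -a12*b02 + a02*b12 = 0 := by
    have sq : (-a12*b02 + a02*b12) * (-a12*b02 + a02*b12) = 0 := by linear_combination (-1) * (a00*b12) * g2 + (1) * (a12*b00) * g2 + (-1) * (a12*b22) * g2 + (1) * (a22*b12) * g2 + (-1) * (a02*b12) * g3 + (1) * (a12*b02) * g3 + (-1) * (a00*b02) * g4 + (1) * (a02*b00) * g4 + (-1) * (a02*b22) * g4 + (1) * (a22*b02) * g4
    exact mul_self_eq_zero.mp sq
  have m025 : -a22*b02 + a02*b22 - a02*b00 + a00*b02 = 0 := by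
    have sq : (-a22*b02 + a02*b22 - a02*b00 + a00*b02) * (-a22*b02 + a02*b22 - a02*b00 + a00*b02) = 0 := by linear_combination (-1) * (a00*b02) * g0 + (1) * (a02*b00) * g0 + (-1) * (a02*b22) * g0 + (1) * (a22*b02) * g0 + (-2) * (a00*b02) * g4 + (2) * (a02*b00) * g4 + (-2) * (a02*b22) * g4 + (2) * (a22*b02) * g4 + (-1) * (a00*b02) * g7 + (1) * (a02*b00) * g7 + (-1) * (a02*b22) * g7 + (1) * (a22*b02) * g7
    exact mul_self_eq_zero.mp sq
  have m034 : -a12*b11 + a12*b00 + a11*b12 - a00*b12 = 0 := by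
    have sq : (-a12*b11 + a12*b00 + a11*b12 - a00*b12) * (-a12*b11 + a12*b00 + a11*b12 - a00*b12) = 0 := by linear_combination (-1) * (a00*b12) * g1 + (1) * (a01*b02) * g1 + (-1) * (a02*b01) * g1 + (1) * (a11*b12) * g1 + (1) * (a12*b00) * g1 + (-1) * (a12*b11) * g1 + (1) * (a01*b02) * g2 + (-1) * (a02*b01) * g2
    exact mul_self_eq_zero.mp sq
  have m035 : -a22*b11 + a22*b00 + a11*b22 - a11*b00 - a00*b22 + a00*b11 = 0 := by
    have sq : (-a22*b11 + a22*b00 + a11*b22 - a11*b00 - a00*b22 + a00*b11) * (-a22*b11 + a22*b00 + a11*b22 - a11*b00 - a00*b22 + a00*b11) = 0 := by linear_combination (1) * (a00*b11) * g6 + (-1) * (a00*b22) * g6 + (-1) * (a11*b00) * g6 + (1) * (a11*b22) * g6 + (1) * (a22*b00) * g6 + (-1) * (a22*b11) * g6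
    exact mul_self_eq_zero.mp sq
  have m045 : -a22*b12 + a12*b22 - a12*b00 + a00*b12 = 0 := by
    have sq : (-a22*b12 + a12*b22 - a12*b00 + a00*b12) * (-a22*b12 + a12*b22 - a12*b00 + a00*b12) = 0 := by linear_combination (1) * (a00*b12) * g2 + (-1) * (a12*b00) * g2 + (1) * (a12*b22) * g2 + (-1) * (a22*b12) * g2 + (1) * (a00*b12) * g8 + (-1) * (a12*b00) * g8 + (1) * (a12*b22) * g8 + (-1) * (a22*b12) * g8
    exact mul_self_eq_zero.mp sq
  have m123 : -a02*b01 + a01*b02 = 0 := by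
    have sq : (-a02*b01 + a01*b02) * (-a02*b01 + a01*b02) = 0 := by linear_combination (1) * (a01*b02) * g2 + (-1) * (a02*b01) * g2
    exact mul_self_eq_zero.mp sq
  have m125 : -a02*b01 + a01*b02 = 0 := by
    have sq : (-a02*b01 + a01*b02) * (-a02*b01 + a01*b02) = 0 := by linear_combination (1) * (a01*b02) * g2 + (-1) * (a02*b01) * g2
    exact mul_self_eq_zero.mp sq
  have m134 : a12*b01 - a01*b12 = 0 := by
    have sq : (a12*b01 - a01*b12) * (a12*b01 - a01*b12) = 0 := by linear_combination (-1) * (a12*b01) * g0 + (1) * (a02*b01) * g1 + (-1) * (a00*b12) * g2 + (1) * (a02*b01) * g2 + (1) * (a11*b12) * g2 + (-1) * (a00*b02) * g4 + (-1) * (a01*b12) * g4 + (1) * (a11*b02) * g4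
    exact mul_self_eq_zero.mp sq
  have m135 : a22*b01 - a11*b01 - a01*b22 + a01*b11 = 0 := by
    have sq : (a22*b01 - a11*b01 - a01*b22 + a01*b11) * (a22*b01 - a11*b01 - a01*b22 + a01*b11) = 0 := by linear_combination (-1) * (a00*b12) * g2 + (1) * (a12*b00) * g2 + (-1) * (a12*b22) * g2 + (1) * (a22*b12) * g2 + (-1) * (a01*b11) * g3 + (1) * (a01*b22) * g3 + (1) * (a11*b01) * g3 + (-1) * (a22*b01) * g3 + (-1) * (a00*b02) * g4 + (1) * (a02*b00) * g4 + (-1) * (a02*b22) * g4 + (1) * (a22*b02) * g4 + (1) * (a00*b01) * g5 + (-1) * (a01*b00) * g5 + (1) * (a01*b11) * g5 + (-1) * (a11*b01) * g5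
    exact mul_self_eq_zero.mp sq
  have m145 : -a12*b01 + a01*b12 = 0 := by
    have sq : (-a12*b01 + a01*b12) * (-a12*b01 + a01*b12) = 0 := by linear_combination (-1) * (a12*b01) * g0 + (1) * (a02*b01) * g1 + (-1) * (a00*b12) * g2 + (1) * (a02*b01) * g2 + (1) * (a11*b12) * g2 + (-1) * (a00*b02) * g4 + (-1) * (a01*b12) * g4 + (1) * (a11*b02) * g4
    exact mul_self_eq_zero.mp sq
  have m234 : a12*b02 - a02*b12 = 0 := by
    have sq : (a12*b02 - a02*b12) * (a12*b02 - a02*b12) = 0 := by linear_combination (-1) * (a00*b12) * g2 + (1) * (a12*b00) * g2 + (-1) * (a12*b22) * g2 + (1) * (a22*b12) * g2 + (-1) * (a02*b12) * g3 + (1) * (a12*b02) * g3 + (-1) * (a00*b02) * g4 + (1) * (a02*b00) * g4 + (-1) * (a02*b22) * g4 + (1) * (a22*b02) * g4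
    exact mul_self_eq_zero.mp sq
  have m235 : a22*b02 - a11*b02 - a02*b22 + a02*b11 = 0 := by
    have sq : (a22*b02 - a11*b02 - a02*b22 + a02*b11) * (a22*b02 - a11*b02 - a02*b22 + a02*b11) = 0 := by linear_combination (-1) * (a01*b12) * g0 + (-1) * (a02*b11) * g0 + (1) * (a02*b22) * g0 + (1) * (a11*b02) * g0 + (-1) * (a22*b02) * g0 + (1) * (a02*b01) * g1 + (-1) * (a00*b12) * g2 + (1) * (a02*b01) * g2 + (1) * (a11*b12) * g2 + (-1) * (a00*b02) * g4 + (-1) * (a01*b12) * g4 + (1) * (a11*b02) * g4 + (-1) * (a00*b02) * g7 + (1) * (a02*b00) * g7 + (-1) * (a02*b22) * g7 + (1) * (a22*b02) * g7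
    exact mul_self_eq_zero.mp sq
  have m245 : -a12*b02 + a02*b12 = 0 := by
    have sq : (-a12*b02 + a02*b12) * (-a12*b02 + a02*b12) = 0 := by linear_combination (-1) * (a00*b12) * g2 + (1) * (a12*b00) * g2 + (-1) * (a12*b22) * g2 + (1) * (a22*b12) * g2 + (-1) * (a02*b12) * g3 + (1) * (a12*b02) * g3 + (-1) * (a00*b02) * g4 + (1) * (a02*b00) * g4 + (-1) * (a02*b22) * g4 + (1) * (a22*b02) * g4
    exact mul_self_eq_zero.mp sq
  have m345 : -a22*b12 + a12*b22 - a12*b11 + a11*b12 = 0 := by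
    have sq : (-a22*b12 + a12*b22 - a12*b11 + a11*b12) * (-a22*b12 + a12*b22 - a12*b11 + a11*b12) = 0 := by linear_combination (1) * (a00*b12) * g1 + (1) * (a01*b02) * g1 + (-1) * (a02*b01) * g1 + (1) * (a11*b12) * g1 + (-1) * (a12*b00) * g1 + (-1) * (a12*b11) * g1 + (2) * (a12*b22) * g1 + (-2) * (a22*b12) * g1 + (3) * (a00*b12) * g2 + (1) * (a01*b02) * g2 + (-1) * (a02*b01) * g2 + (-3) * (a12*b00) * g2 + (3) * (a12*b22) * g2 + (-3) * (a22*b12) * g2 + (1) * (a00*b12) * g8 + (-1) * (a12*b00) * g8 + (1) * (a12*b22) * g8 + (-1) * (a22*b12) * g8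
    exact mul_self_eq_zero.mp sq
  by_cases h1 : a01 = 0
  case neg => 
    have hj := h1
    refine ⟨(a00*b01 - a01*b00), (0*b00 - b01), (a01 - 0*a00), ?_, ?_, ?_, ?_, ?_, ?_, ?_⟩
    · rintro ⟨-, -, h⟩; exact hj (by linear_combination h)
    · ring
    · ring
    · linear_combination m012
    · linear_combination m013
    · linear_combination m014
    · linear_combination m015
  case pos =>
  by_cases h2 : a02 = 0
  case neg =>
    have hj := h2
    refine ⟨(a00*b02 - a02*b00), (0*b00 - b02), (a02 - 0*a00), ?_, ?_, ?_, ?_, ?_, ?_, ?_⟩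
    · rintro ⟨-, -, h⟩; exact hj (by linear_combination h)
    · ring
    · linear_combination -m012
    · ring
    · linear_combination m023
    · linear_combination m024
    · linear_combination m025
  case pos =>
  by_cases h4 : a12 = 0
  case neg =>
    have hj := h4
    refine ⟨(a00*b12 - a12*b00), (0*b00 - b12), (a12 - 0*a00), ?_, ?_, ?_, ?_, ?_, ?_, ?_⟩
    · rintro ⟨-, -, h⟩; exact hj (by linear_combination h)
    · ring
    · linear_combination -m014
    · linear_combination -m024
    · linear_combination -m034
    · ring
    · linear_combination m045
  case pos =>
  by_cases h3 : a11 - a00 = 0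
  case neg =>
    have hj := h3
    refine ⟨(a00*b11 - a11*b00), (1*b00 - b11), (a11 - 1*a00), ?_, ?_, ?_, ?_, ?_, ?_, ?_⟩
    · rintro ⟨-, -, h⟩; exact hj (by linear_combination h)
    · ring
    · linear_combination -m013
    · linear_combination -m023
    · ring
    · linear_combination m034
    · linear_combination m035
  case pos =>
  by_cases h5 : a22 - a00 = 0
  case neg =>
    have hj := h5
    refine ⟨(a00*b22 - a22*b00), (1*b00 - b22), (a22 - 1*a00), ?_, ?_, ?_, ?_, ?_, ?_, ?_⟩
    · rintro ⟨-, -, h⟩; exact hj (by linear_combination h)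
    · ring
    · linear_combination -m015
    · linear_combination -m025
    · linear_combination -m035
    · linear_combination -m045
    · ring
  case pos =>
    refine ⟨-a00, 1, 0, ?_, by ring, by linear_combination h1, by linear_combination h2, by linear_combination h3, by linear_combination h4, by linear_combination h5⟩
    rintro ⟨-, h, -⟩; exact one_ne_zero h



lemma fin3_mk_two : (⟨2, by norm_num⟩ : Fin 3) = 2 := rfl

/-- If `W` is a 3-dimensional complex linear subspace of symmetric
3×3 complex matrices containing an invertible matrix, then there is a vector
`v ∈ ℂ³` not in the kernel of any nonzero element of `W`. -/
theorem stmt_0 (W : Submodule ℂ (Matrix (Fin 3) (Fin 3) ℂ))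
    (hsymm : ∀ M ∈ W, M.IsSymm)
    (hdim : Module.finrank ℂ W = 3)
    (hunit : ∃ M ∈ W, IsUnit M) :
    ∃ v : Fin 3 → ℂ, ∀ M ∈ W, M ≠ 0 → M.mulVec v ≠ 0 := by
  by_contra hcon
  push_neg at hcon
  obtain ⟨M₀, hM₀W, hM₀u⟩ := hunit
  obtain ⟨S, hSdet, hcongr⟩ := congr_one M₀ (hsymm _ hM₀W) hM₀u
  have hS1 : S * S⁻¹ = 1 := Matrix.mul_nonsing_inv _ hSdet
  have hTdet : IsUnit Sᵀ.det := by rw [Matrix.det_transpose]; exact hSdet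
  have hT2 : Sᵀ⁻¹ * Sᵀ = 1 := Matrix.nonsing_inv_mul _ hTdet
  have hback : ∀ M : Matrix (Fin 3) (Fin 3) ℂ, Sᵀ⁻¹ * (Sᵀ * M * S) * S⁻¹ = M := by
    intro M
    calc Sᵀ⁻¹ * (Sᵀ * M * S) * S⁻¹ = (Sᵀ⁻¹ * Sᵀ) * M * (S * S⁻¹) := by
          simp only [Matrix.mul_assoc]
      _ = M := by rw [hT2, hS1, Matrix.one_mul, Matrix.mul_one]
  let ψ : Matrix (Fin 3) (Fin 3) ℂ ≃ₗ[ℂ] Matrix (Fin 3) (Fin 3) ℂ :=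
    { toFun := fun M => Sᵀ * M * S,
       invFun := fun M => Sᵀ⁻¹ * M * S⁻¹,
       map_add' := fun M N => by
         simp only [Matrix.add_mul, Matrix.mul_add],
       map_smul' := fun c M => by
         simp only [Matrix.smul_mul, Matrix.mul_smul, RingHom.id_apply],
       left_inv := fun M => hback M,
       right_inv := fun M => by
         calc Sᵀ * (Sᵀ⁻¹ * M * S⁻¹) * S = (Sᵀ * Sᵀ⁻¹) * M * (S⁻¹ * S) := by
               simp only [Matrix.mul_assoc]
           _ = M := by
               rw [Matrix.mul_nonsing_inv _ hTdet, Matrix.nonsing_inv_mul _ hSdet,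
                 Matrix.one_mul, Matrix.mul_one] }
  let W' := W.map (ψ : Matrix (Fin 3) (Fin 3) ℂ →ₗ[ℂ] Matrix (Fin 3) (Fin 3) ℂ)
  have h3' : Module.finrank ℂ W' = 3 := by
    rw [LinearEquiv.finrank_map_eq]; exact hdim
  have h1' : (1 : Matrix (Fin 3) (Fin 3) ℂ) ∈ W' := ⟨M₀, hM₀W, hcongr⟩
  have hsymm' : ∀ M' ∈ W', M'.IsSymm := by
    rintro M' ⟨M, hM, rfl⟩
    show (Sᵀ * M * S)ᵀ = Sᵀ * M * S
    rw [Matrix.transpose_mul, Matrix.transpose_mul, Matrix.transpose_transpose,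
      hsymm M hM, Matrix.mul_assoc]
  obtain ⟨A, B, hAW, hBW, hspan, hind⟩ := exists_AB W' h3' h1'
  have hA := hsymm' A hAW
  have hB := hsymm' B hBW
  have hA10 : A 1 0 = A 0 1 := hA.apply 0 1
  have hA20 : A 2 0 = A 0 2 := hA.apply 0 2
  have hA21 : A 2 1 = A 1 2 := hA.apply 1 2
  have hB10 : B 1 0 = B 0 1 := hB.apply 0 1
  have hB20 : B 2 0 = B 0 2 := hB.apply 0 2
  have hB21 : B 2 1 = B 1 2 := hB.apply 1 2
  have hcon' : ∀ u : Fin 3 → ℂ, ∃ M' ∈ W', M' ≠ 0 ∧ M'.mulVec u = 0 := by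
    intro u
    obtain ⟨M, hMW, hMne, hMv⟩ := hcon (S.mulVec u)
    refine ⟨Sᵀ * M * S, ⟨M, hMW, rfl⟩, ?_, ?_⟩
    · intro h0
      apply hMne
      have h1 := congrArg (fun X => Sᵀ⁻¹ * X * S⁻¹) h0
      simpa [hback M] using h1
    · rw [← Matrix.mulVec_mulVec, ← Matrix.mulVec_mulVec, hMv, Matrix.mulVec_zero]
  have hc0 : ∀ x y z : ℂ, -(A 2 2)*(B 1 2)*x*x*z*z - (A 2 2)*(B 1 1)*x*x*y*z + (A 2 2)*(B 0 2)*x*y*z*z + (A 2 2)*(B 0 1)*x*y*y*z - (A 2 2)*(B 0 1)*x*x*x*z + (A 2 2)*(B 0 0)*x*x*y*z + (A 1 2)*(B 2 2)*x*x*z*z - (A 1 2)*(B 1 1)*x*x*y*y - (A 1 2)*(B 0 2)*x*z*z*z + (A 1 2)*(B 0 2)*x*y*y*z + (A 1 2)*(B 0 2)*x*x*x*z - (A 1 2)*(B 0 1)*x*y*z*z + (A 1 2)*(B 0 1)*x*y*y*y - (A 1 2)*(B 0 1)*x*x*x*y - (A 1 2)*(B 0 0)*x*x*z*z + (A 1 2)*(B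 0 0)*x*x*y*y + (A 1 1)*(B 2 2)*x*x*y*z + (A 1 1)*(B 1 2)*x*x*y*y - (A 1 1)*(B 0 2)*x*y*z*z + (A 1 1)*(B 0 2)*x*x*x*y - (A 1 1)*(B 0 1)*x*y*y*z - (A 1 1)*(B 0 0)*x*x*y*z - (A 0 2)*(B 2 2)*x*y*z*z + (A 0 2)*(B 1 2)*x*z*z*z - (A 0 2)*(B 1 2)*x*y*y*z - (A 0 2)*(B 1 2)*x*x*x*z + (A 0 2)*(B 1 1)*x*y*z*z - (A 0 2)*(B 1 1)*x*x*x*y + (A 0 2)*(B 0 1)*x*x*z*z + (A 0 2)*(B 0 1)*x*x*y*y - (A 0 2)*(B 0 1)*x*x*x*x + (A 0 2)*(B 0 0)*x*x*x*y - (A 0 1)*(B 2 2)*x*y*y*z + (A 0 1)*(B 2 2)*x*x*x*z + (A 0 1)*(B 1 2)*x*y*z*z - (A 0 1)*(B 1 2)*x*y*y*y + (A 0 1)*(B 1 2)*x*x*x*y + (A 0 1)*(B 1 1)*x*y*y*z - (A 0 1)*(B 0 2)*x*x*z*z - (A 0 1)*(B 0 2)*x*x*y*y + (A 0 1)*(B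 0 2)*x*x*x*x - (A 0 1)*(B 0 0)*x*x*x*z - (A 0 0)*(B 2 2)*x*x*y*z + (A 0 0)*(B 1 2)*x*x*z*z - (A 0 0)*(B 1 2)*x*x*y*y + (A 0 0)*(B 1 1)*x*x*y*z - (A 0 0)*(B 0 2)*x*x*x*y + (A 0 0)*(B 0 1)*x*x*x*z = 0 := by
    intro x y z
    obtain ⟨M', hM'W, hM'ne, hM'v⟩ := hcon' ![x, y, z]
    obtain ⟨r, s, t, hrep⟩ := hspan M' hM'W
    have hnz : ¬(r = 0 ∧ s = 0 ∧ t = 0) := by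
      rintro ⟨rfl, rfl, rfl⟩
      apply hM'ne
      simpa using hrep
    have h0 := congrFun hM'v 0
    have h1 := congrFun hM'v 1
    have h2 := congrFun hM'v 2
    rw [hrep] at h0 h1 h2
    simp only [Matrix.add_mulVec, Matrix.smul_mulVec, Matrix.one_mulVec,
      Pi.add_apply, Pi.smul_apply, smul_eq_mul, Matrix.mulVec, dotProduct,
      Fin.sum_univ_three, Matrix.cons_val_zero, Matrix.cons_val_one, Matrix.head_cons,
      Matrix.cons_val_two, Matrix.tail_cons, Pi.zero_apply] at h0 h1 h2
    simp [Matrix.add_apply, Matrix.smul_apply, Matrix.one_apply, Fin.ext_iff] at h0 h1 h2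
    rw [hA10, hB10] at h1
    rw [hA20, hA21, hB20, hB21] at h2
    by_cases hs0 : s = 0
    · by_cases ht0 : t = 0
      · have hr : r ≠ 0 := fun h => hnz ⟨h, hs0, ht0⟩
        rw [hs0, ht0] at h0 h1 h2
        have hx : x = 0 := by
          have : r * x = 0 := by linear_combination h0
          exact (mul_eq_zero.mp this).resolve_left hr
        have hy : y = 0 := by
          have : r * y = 0 := by linear_combination h1
          exact (mul_eq_zero.mp this).resolve_left hr
        have hz : z = 0 := by
          have : r * z = 0 := by linear_combination h2
          exact (mul_eq_zero.mp this).resolve_left hr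
        rw [hx, hy, hz]; ring
      · have hk0 : s*(((A 0 1)*x + (A 1 1)*y + (A 1 2)*z)*z - ((A 0 2)*x + (A 1 2)*y + (A 2 2)*z)*y) + t*(((B 0 1)*x + (B 1 1)*y + (B 1 2)*z)*z - ((B 0 2)*x + (B 1 2)*y + (B 2 2)*z)*y) = 0 := by linear_combination z*h1 - y*h2
        have hk1 : s*(((A 0 2)*x + (A 1 2)*y + (A 2 2)*z)*x - ((A 0 0)*x + (A 0 1)*y + (A 0 2)*z)*z) + t*(((B 0 2)*x + (B 1 2)*y + (B 2 2)*z)*x - ((B 0 0)*x + (B 0 1)*y + (B 0 2)*z)*z) = 0 := by linear_combination x*h2 - z*h0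
        have hk2 : s*(((A 0 0)*x + (A 0 1)*y + (A 0 2)*z)*y - ((A 0 1)*x + (A 1 1)*y + (A 1 2)*z)*x) + t*(((B 0 0)*x + (B 0 1)*y + (B 0 2)*z)*y - ((B 0 1)*x + (B 1 1)*y + (B 1 2)*z)*x) = 0 := by linear_combination y*h0 - x*h1
        have hE : t * (-(A 2 2)*(B 1 2)*x*x*z*z - (A 2 2)*(B 1 1)*x*x*y*z + (A 2 2)*(B 0 2)*x*y*z*z + (A 2 2)*(B 0 1)*x*y*y*z - (A 2 2)*(B 0 1)*x*x*x*z + (A 2 2)*(B 0 0)*x*x*y*z + (A 1 2)*(B 2 2)*x*x*z*z - (A 1 2)*(B 1 1)*x*x*y*y - (A 1 2)*(B 0 2)*x*z*z*z + (A 1 2)*(B 0 2)*x*y*y*z + (A 1 2)*(B 0 2)*x*x*x*z - (A 1 2)*(B 0 1)*x*y*z*z + (A 1 2)*(B 0 1)*x*y*y*y - (A 1 2)*(B 0 1)*x*x*x*y - (A 1 2)*(B 0 0)*x*x*z*z + (A 1 2)*(B 0 0)*x*x*y*y + (A 1 1)*(B 2 2)*x*x*y*z + (A 1 1)*(B 1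 2)*x*x*y*y - (A 1 1)*(B 0 2)*x*y*z*z + (A 1 1)*(B 0 2)*x*x*x*y - (A 1 1)*(B 0 1)*x*y*y*z - (A 1 1)*(B 0 0)*x*x*y*z - (A 0 2)*(B 2 2)*x*y*z*z + (A 0 2)*(B 1 2)*x*z*z*z - (A 0 2)*(B 1 2)*x*y*y*z - (A 0 2)*(B 1 2)*x*x*x*z + (A 0 2)*(B 1 1)*x*y*z*z - (A 0 2)*(B 1 1)*x*x*x*y + (A 0 2)*(B 0 1)*x*x*z*z + (A 0 2)*(B 0 1)*x*x*y*y - (A 0 2)*(B 0 1)*x*x*x*x + (A 0 2)*(B 0 0)*x*x*x*y - (A 0 1)*(B 2 2)*x*y*y*z + (A 0 1)*(B 2 2)*x*x*x*z + (A 0 1)*(B 1 2)*x*y*z*z - (A 0 1)*(B 1 2)*x*y*y*y + (A 0 1)*(B 1 2)*x*x*x*y + (A 0 1)*(B 1 1)*x*y*y*z - (A 0 1)*(B 0 2)*x*x*z*z - (A 0 1)*(B 0 2)*x*x*y*y + (A 0 1)*(B 0 2)*x*x*x*x - (A 0 1)*(B 0 0)*x*x*x*z - (A 0 0)*(B 2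 2)*x*x*y*z + (A 0 0)*(B 1 2)*x*x*z*z - (A 0 0)*(B 1 2)*x*x*y*y + (A 0 0)*(B 1 1)*x*x*y*z - (A 0 0)*(B 0 2)*x*x*x*y + (A 0 0)*(B 0 1)*x*x*x*z) = 0 := by
          linear_combination ((((A 0 2)*x + (A 1 2)*y + (A 2 2)*z)*x - ((A 0 0)*x + (A 0 1)*y + (A 0 2)*z)*z)) * hk2 - ((((A 0 0)*x + (A 0 1)*y + (A 0 2)*z)*y - ((A 0 1)*x + (A 1 1)*y + (A 1 2)*z)*x)) * hk1
        exact (mul_eq_zero.mp hE).resolve_left ht0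
    · have hk0 : s*(((A 0 1)*x + (A 1 1)*y + (A 1 2)*z)*z - ((A 0 2)*x + (A 1 2)*y + (A 2 2)*z)*y) + t*(((B 0 1)*x + (B 1 1)*y + (B 1 2)*z)*z - ((B 0 2)*x + (B 1 2)*y + (B 2 2)*z)*y) = 0 := by linear_combination z*h1 - y*h2
      have hk1 : s*(((A 0 2)*x + (A 1 2)*y + (A 2 2)*z)*x - ((A 0 0)*x + (A 0 1)*y + (A 0 2)*z)*z) + t*(((B 0 2)*x + (B 1 2)*y + (B 2 2)*z)*x - ((B 0 0)*x + (B 0 1)*y + (B 0 2)*z)*z) = 0 := by linear_combination x*h2 - z*h0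
      have hk2 : s*(((A 0 0)*x + (A 0 1)*y + (A 0 2)*z)*y - ((A 0 1)*x + (A 1 1)*y + (A 1 2)*z)*x) + t*(((B 0 0)*x + (B 0 1)*y + (B 0 2)*z)*y - ((B 0 1)*x + (B 1 1)*y + (B 1 2)*z)*x) = 0 := by linear_combination y*h0 - x*h1
      have hE : s * (-(A 2 2)*(B 1 2)*x*x*z*z - (A 2 2)*(B 1 1)*x*x*y*z + (A 2 2)*(B 0 2)*x*y*z*z + (A 2 2)*(B 0 1)*x*y*y*z - (A 2 2)*(B 0 1)*x*x*x*z + (A 2 2)*(B 0 0)*x*x*y*z + (A 1 2)*(B 2 2)*x*x*z*z - (A 1 2)*(B 1 1)*x*x*y*y - (A 1 2)*(B 0 2)*x*z*z*z + (A 1 2)*(B 0 2)*x*y*y*z + (A 1 2)*(B 0 2)*x*x*x*z - (A 1 2)*(B 0 1)*x*y*z*z + (A 1 2)*(B 0 1)*x*y*y*y - (A 1 2)*(B 0 1)*x*x*x*y - (A 1 2)*(B 0 0)*x*x*z*z + (A 1 2)*(B 0 0)*x*x*y*y + (A 1 1)*(B 2 2)*x*x*y*z + (A 1 1)*(B 1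 2)*x*x*y*y - (A 1 1)*(B 0 2)*x*y*z*z + (A 1 1)*(B 0 2)*x*x*x*y - (A 1 1)*(B 0 1)*x*y*y*z - (A 1 1)*(B 0 0)*x*x*y*z - (A 0 2)*(B 2 2)*x*y*z*z + (A 0 2)*(B 1 2)*x*z*z*z - (A 0 2)*(B 1 2)*x*y*y*z - (A 0 2)*(B 1 2)*x*x*x*z + (A 0 2)*(B 1 1)*x*y*z*z - (A 0 2)*(B 1 1)*x*x*x*y + (A 0 2)*(B 0 1)*x*x*z*z + (A 0 2)*(B 0 1)*x*x*y*y - (A 0 2)*(B 0 1)*x*x*x*x + (A 0 2)*(B 0 0)*x*x*x*y - (A 0 1)*(B 2 2)*x*y*y*z + (A 0 1)*(B 2 2)*x*x*x*z + (A 0 1)*(B 1 2)*x*y*z*z - (A 0 1)*(B 1 2)*x*y*y*y + (A 0 1)*(B 1 2)*x*x*x*y + (A 0 1)*(B 1 1)*x*y*y*z - (A 0 1)*(B 0 2)*x*x*z*z - (A 0 1)*(B 0 2)*x*x*y*y + (A 0 1)*(B 0 2)*x*x*x*x - (A 0 1)*(B 0 0)*x*x*x*z - (A 0 0)*(B 2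 2)*x*x*y*z + (A 0 0)*(B 1 2)*x*x*z*z - (A 0 0)*(B 1 2)*x*x*y*y + (A 0 0)*(B 1 1)*x*x*y*z - (A 0 0)*(B 0 2)*x*x*x*y + (A 0 0)*(B 0 1)*x*x*x*z) = 0 := by
        linear_combination ((((B 0 0)*x + (B 0 1)*y + (B 0 2)*z)*y - ((B 0 1)*x + (B 1 1)*y + (B 1 2)*z)*x)) * hk1 - ((((B 0 2)*x + (B 1 2)*y + (B 2 2)*z)*x - ((B 0 0)*x + (B 0 1)*y + (B 0 2)*z)*z)) * hk2
      exact (mul_eq_zero.mp hE).resolve_left hs0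
  obtain ⟨r, s, t, hnz, e00, e01, e02, e11, e12, e22⟩ :=
    key0 (A 0 0) (A 0 1) (A 0 2) (A 1 1) (A 1 2) (A 2 2)
      (B 0 0) (B 0 1) (B 0 2) (B 1 1) (B 1 2) (B 2 2) hc0
  have hM : r•(1:Matrix (Fin 3) (Fin 3) ℂ) + s•A + t•B = 0 := by
    ext i j
    fin_cases i <;> fin_cases j <;>
      simp only [Matrix.add_apply, Matrix.smul_apply, Matrix.one_apply, smul_eq_mul,
        Matrix.zero_apply, Fin.ext_iff, Fin.val_zero, Fin.val_one, Fin.val_two,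
        Fin.mk_one, Fin.mk_zero, fin3_mk_two, Fin.isValue, show ((0:ℕ) ≠ 1) by norm_num,
        show ((0:ℕ) ≠ 2) by norm_num, show ((1:ℕ) ≠ 0) by norm_num,
        show ((1:ℕ) ≠ 2) by norm_num, show ((2:ℕ) ≠ 0) by norm_num,
        show ((2:ℕ) ≠ 1) by norm_num, if_true, if_false] <;>
      norm_num
    all_goals first
      | linear_combination e00
      | linear_combination e01
      | linear_combination e02
      | linear_combination e11
      | linear_combination e12
      | linear_combination e22
      | linear_combination e01 + s*hA10 + t*hB10
      | linear_combination e02 + s*hA20 + t*hB20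
      | linear_combination e12 + s*hA21 + t*hB21
  exact hnz (hind r s t hM)
end

section
/- Every 2-dimensional complex linear subspace W of the space of symmetric 2×2 matrices with complex entries contains an invertible matrix, and there exists a vector v ∈ ℂ² such that for every M ∈ W with M ≠ 0 one has M · v ≠ 0. -/
open Matrix

private lemma minors_zero {a b c d e f : ℂ}
    (h1 : a*c - b*b = 0) (h2 : d*f - e*e = 0)
    (h3 : (a+d)*(c+f) - (b+e)*(b+e) = 0) :
    a*e - b*d = 0 ∧ a*f - c*d = 0 ∧ b*f - c*e = 0 := by
  have hmid : a*f + c*d - 2*(b*e) = 0 := by linear_combination h3 - h1 - h2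
  refine ⟨?_, ?_, ?_⟩
  · have h : (a*e - b*d)^2 = 0 := by
      linear_combination (a*d)*hmid - a^2*h2 - d^2*h1
    exact pow_eq_zero_iff two_ne_zero |>.mp h
  · have h : (a*f - c*d)^2 = 0 := by
      linear_combination (a*f + c*d + 2*(b*e))*hmid - 4*(d*f)*h1 - 4*(b*b)*h2
    exact pow_eq_zero_iff two_ne_zero |>.mp h
  · have h : (b*f - c*e)^2 = 0 := by
      linear_combination (c*f)*hmid - c^2*h2 - f^2*h1
    exact pow_eq_zero_iff two_ne_zero |>.mp h

private lemma prop_lemma {a b c d e f : ℂ}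
    (h1 : a*e - b*d = 0) (h2 : a*f - c*d = 0) (h3 : b*f - c*e = 0)
    (hM : ¬(a = 0 ∧ b = 0 ∧ c = 0)) :
    ∃ l : ℂ, d = l*a ∧ e = l*b ∧ f = l*c := by
  by_cases ha : a = 0
  · by_cases hb : b = 0
    · have hc : c ≠ 0 := fun hc => hM ⟨ha, hb, hc⟩
      subst ha hb
      have hd : d = 0 := by
        rcases mul_eq_zero.mp (show c*d = 0 by linear_combination -h2) with h | h
        · exact absurd h hc
        · exact h
      have he : e = 0 := by
        rcases mul_eq_zero.mp (show c*e = 0 by linear_combination -h3) with h | h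
        · exact absurd h hc
        · exact h
      exact ⟨f/c, by simp [hd], by simp [he], by field_simp⟩
    · refine ⟨e/b, ?_, by field_simp, ?_⟩
      · subst ha
        have hd : d = 0 := by
          rcases mul_eq_zero.mp (show b*d = 0 by linear_combination -h1) with h | h
          · exact absurd h hb
          · exact h
        simp [hd]
      · field_simp
        linear_combination h3
  · refine ⟨d/a, by field_simp, ?_, ?_⟩
    · field_simp; linear_combination h1
    · field_simp; linear_combination h2


/-- Every 2-dimensional complex linear subspace of symmetric 2×2
complex matrices contains an invertible matrix, and there is a vector `v ∈ ℂ²`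
not in the kernel of any nonzero element of `W`. -/
theorem stmt_1 (W : Submodule ℂ (Matrix (Fin 2) (Fin 2) ℂ))
    (hsymm : ∀ M ∈ W, M.IsSymm)
    (hdim : Module.finrank ℂ W = 2) :
    (∃ M ∈ W, IsUnit M) ∧
      ∃ v : Fin 2 → ℂ, ∀ M ∈ W, M ≠ 0 → M.mulVec v ≠ 0 := by
  have bW : Module.Basis (Fin 2) ℂ W := Module.finBasisOfFinrankEq ℂ W hdim
  set M : Matrix (Fin 2) (Fin 2) ℂ := ((bW 0 : W) : Matrix (Fin 2) (Fin 2) ℂ) with hM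
  set N : Matrix (Fin 2) (Fin 2) ℂ := ((bW 1 : W) : Matrix (Fin 2) (Fin 2) ℂ) with hN
  have hMW : M ∈ W := (bW 0).2
  have hNW : N ∈ W := (bW 1).2
  have hMs : M 1 0 = M 0 1 := (hsymm M hMW).apply 0 1
  have hNs : N 1 0 = N 0 1 := (hsymm N hNW).apply 0 1
  have hrep : ∀ P ∈ W, ∃ x y : ℂ, P = x • M + y • N := by
    intro P hP
    refine ⟨bW.repr ⟨P, hP⟩ 0, bW.repr ⟨P, hP⟩ 1, ?_⟩
    have h := bW.sum_repr ⟨P, hP⟩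
    rw [Fin.sum_univ_two] at h
    have := congrArg (Subtype.val) h
    simpa using this.symm
  have hNM : ∀ l : ℂ, N ≠ l • M := by
    intro l hl
    have h1 : bW 1 = l • bW 0 := Subtype.ext (by rw [Submodule.coe_smul]; exact hl)
    have h2 := Fintype.linearIndependent_iff.mp bW.linearIndependent ![l, -1]
      (by rw [Fin.sum_univ_two]; simp [h1]) 1
    simp at h2
  have hMne : M ≠ 0 := by
    intro h
    exact bW.ne_zero 0 (Subtype.ext (by rw [← hM, h]; rfl))
  have hM0 : ¬(M 0 0 = 0 ∧ M 0 1 = 0 ∧ M 1 1 = 0) := by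
    rintro ⟨ha0, hb0, hc0⟩
    apply hMne
    rw [Matrix.eta_fin_two M, hMs, ha0, hb0, hc0]
    ext i j
    fin_cases i <;> fin_cases j <;> simp
  have hprop : ∀ l : ℂ, N 0 0 = l * M 0 0 → N 0 1 = l * M 0 1 → N 1 1 = l * M 1 1 → False := by
    intro l hd he hf
    apply hNM l
    rw [Matrix.eta_fin_two N, Matrix.eta_fin_two M, hMs, hNs, hd, he, hf]
    ext i j
    fin_cases i <;> fin_cases j <;> simp
  have hdet : ∀ P : Matrix (Fin 2) (Fin 2) ℂ, P 0 0 * P 1 1 - P 0 1 * P 1 0 ≠ 0 → IsUnit P := by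
    intro P h
    rw [Matrix.isUnit_iff_isUnit_det, isUnit_iff_ne_zero, Matrix.det_fin_two]
    exact h
  constructor
  · by_cases hdM : M 0 0 * M 1 1 - M 0 1 * M 0 1 = 0
    · by_cases hdN : N 0 0 * N 1 1 - N 0 1 * N 0 1 = 0
      · by_cases hdMN : (M 0 0 + N 0 0) * (M 1 1 + N 1 1) - (M 0 1 + N 0 1) * (M 0 1 + N 0 1) = 0
        · exfalso
          obtain ⟨m1, m2, m3⟩ := minors_zero hdM hdN hdMN
          obtain ⟨l, hd, he, hf⟩ := prop_lemma m1 m2 m3 hM0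
          exact hprop l hd he hf
        · refine ⟨M + N, W.add_mem hMW hNW, hdet _ ?_⟩
          simp only [Matrix.add_apply, hMs, hNs]
          exact hdMN
      · refine ⟨N, hNW, hdet _ ?_⟩
        rw [hNs]; exact hdN
    · refine ⟨M, hMW, hdet _ ?_⟩
      rw [hMs]; exact hdM
  · have mv : ∀ (P : Matrix (Fin 2) (Fin 2) ℂ) (v : Fin 2 → ℂ) (i : Fin 2),
        P.mulVec v i = P i 0 * v 0 + P i 1 * v 1 := by
      intro P v i
      simp [Matrix.mulVec, dotProduct, Fin.sum_univ_two]
    have key : ∀ v : Fin 2 → ℂ,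
        (M.mulVec v 0) * (N.mulVec v 1) - (M.mulVec v 1) * (N.mulVec v 0) ≠ 0 →
        ∀ P ∈ W, P ≠ 0 → P.mulVec v ≠ 0 := by
      intro v hv P hP hP0 hPv
      obtain ⟨x, y, rfl⟩ := hrep P hP
      have h0 : x * M.mulVec v 0 + y * N.mulVec v 0 = 0 := by
        have := congrFun hPv 0
        simpa [Matrix.add_mulVec, Matrix.smul_mulVec] using this
      have h1 : x * M.mulVec v 1 + y * N.mulVec v 1 = 0 := by
        have := congrFun hPv 1
        simpa [Matrix.add_mulVec, Matrix.smul_mulVec] using this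
      have hx : x = 0 := by
        have hh : x * ((M.mulVec v 0) * (N.mulVec v 1) - (M.mulVec v 1) * (N.mulVec v 0)) = 0 := by
          linear_combination (N.mulVec v 1) * h0 - (N.mulVec v 0) * h1
        rcases mul_eq_zero.mp hh with h | h
        · exact h
        · exact absurd h hv
      have hy : y = 0 := by
        have hh : y * ((M.mulVec v 0) * (N.mulVec v 1) - (M.mulVec v 1) * (N.mulVec v 0)) = 0 := by
          linear_combination (M.mulVec v 0) * h1 - (M.mulVec v 1) * h0
        rcases mul_eq_zero.mp hh with h | h
        · exact h
        · exact absurd h hv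
      exact hP0 (by rw [hx, hy]; simp)
    by_cases hm1 : M 0 0 * N 0 1 - M 0 1 * N 0 0 = 0
    · by_cases hm3 : M 0 1 * N 1 1 - M 1 1 * N 0 1 = 0
      · have hm2 : M 0 0 * N 1 1 - M 1 1 * N 0 0 ≠ 0 := by
          intro hm2
          obtain ⟨l, hd, he, hf⟩ := prop_lemma hm1 hm2 hm3 hM0
          exact hprop l hd he hf
        refine ⟨![1, 1], key _ ?_⟩
        simp only [mv, hMs, hNs, Matrix.cons_val_zero, Matrix.cons_val_one, Matrix.head_cons]
        intro h
        apply hm2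
        linear_combination h - hm1 - hm3
      · refine ⟨![0, 1], key _ ?_⟩
        simp only [mv, hMs, hNs, Matrix.cons_val_zero, Matrix.cons_val_one, Matrix.head_cons]
        intro h
        apply hm3
        linear_combination h
    · refine ⟨![1, 0], key _ ?_⟩
      simp only [mv, hMs, hNs, Matrix.cons_val_zero, Matrix.cons_val_one, Matrix.head_cons]
      intro h
      apply hm1
      linear_combination h
end

section
/- Let U ⊆ ℂ^d be a connected open set, let k be a natural number, and let f₁, …, f_k, g₁, …, g_k : U → ℂ be holomorphic functions such that ∑_{i=1}^{k} f_i(z) · conj(g_i(z)) = 0 for all z ∈ U, where conj denotes complex conjugation. Then ∑_{i=1}^{k} f_i(z) · conj(g_i(w)) = 0 for all z, w ∈ U. -/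
open Complex Metric Set Function Filter

/-- Real points near 0 give frequent zeros in the punctured neighborhood filter. -/
lemma freq_real_zero {P : ℂ → Prop} {δ : ℝ} (hδ : 0 < δ)
    (h : ∀ x : ℝ, x ≠ 0 → |x| < δ → P (x : ℂ)) : ∃ᶠ t in nhdsWithin (0 : ℂ) {(0:ℂ)}ᶜ, P t := by
  rw [Filter.frequently_iff]
  intro s hs
  rcases mem_nhdsWithin.1 hs with ⟨V, hVo, hV0, hVs⟩
  rcases Metric.isOpen_iff.1 hVo 0 hV0 with ⟨ε, hε, hball⟩
  set x : ℝ := min δ ε / 2 with hx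
  have hx0 : 0 < x := by positivity
  have hxδ : x < δ := by
    have : x ≤ δ / 2 := by
      have := min_le_left δ ε
      simp only [hx]; linarith
    linarith
  have hxε : x < ε := by
    have : x ≤ ε / 2 := by
      have := min_le_right δ ε
      simp only [hx]; linarith
    linarith
  refine ⟨(x : ℂ), hVs ⟨hball ?_, ?_⟩, h x (ne_of_gt hx0) (by rwa [abs_of_pos hx0])⟩
  · simp only [mem_ball, Complex.dist_eq, sub_zero, Complex.norm_real, Real.norm_eq_abs]
    rwa [abs_of_pos hx0]
  · simp only [mem_compl_iff, mem_singleton_iff]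
    exact_mod_cast (ne_of_gt hx0)

/-- Two-variable decoupling on a bidisc: if `ψ` is holomorphic on
`ball c r ×ˢ ball (conj c) r` and `ψ (t, conj t) = 0`, then `ψ = 0`. -/
lemma two_var_decouple {c : ℂ} {r : ℝ} (hr : 0 < r) {ψ : ℂ × ℂ → ℂ}
    (hψ : DifferentiableOn ℂ ψ (ball c r ×ˢ ball ((starRingEnd ℂ) c) r))
    (hdiag : ∀ t ∈ ball c r, ψ (t, (starRingEnd ℂ) t) = 0) :
    ∀ t ∈ ball c r, ∀ s ∈ ball ((starRingEnd ℂ) c) r, ψ (t, s) = 0 := by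
  -- Step A: for real y, the u-slice vanishes.
  have stepA : ∀ y : ℝ, |y| < r → ∀ u : ℂ,
      dist u (-(I * (y:ℂ))) < r → dist u (I * (y:ℂ)) < r →
      ψ (c + u + I * (y:ℂ), (starRingEnd ℂ) c + u - I * (y:ℂ)) = 0 := by
    intro y hy
    set Ω : Set ℂ := ball (-(I * (y:ℂ))) r ∩ ball (I * (y:ℂ)) r with hΩ
    have hΩo : IsOpen Ω := isOpen_ball.inter isOpen_ball
    have hΩc : IsPreconnected Ω := ((convex_ball _ _).inter (convex_ball _ _)).isPreconnected
    have hmem : ∀ u ∈ Ω,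
        (c + u + I * (y:ℂ), (starRingEnd ℂ) c + u - I * (y:ℂ)) ∈
          ball c r ×ˢ ball ((starRingEnd ℂ) c) r := by
      rintro u ⟨h1, h2⟩
      constructor
      · rw [mem_ball, Complex.dist_eq, show c + u + I * (y:ℂ) - c = u - -(I * (y:ℂ)) by ring,
          ← Complex.dist_eq]
        exact h1
      · rw [mem_ball, Complex.dist_eq,
          show (starRingEnd ℂ) c + u - I * (y:ℂ) - (starRingEnd ℂ) c = u - I * (y:ℂ) by ring,
          ← Complex.dist_eq]
        exact h2
    have hinner : Differentiable ℂ
        (fun u : ℂ => (c + u + I * (y:ℂ), (starRingEnd ℂ) c + u - I * (y:ℂ))) := by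
      apply Differentiable.prodMk
      · exact (((differentiable_const c).add differentiable_id).add_const _)
      · exact (((differentiable_const _).add differentiable_id).sub_const _)
    have hsl : DifferentiableOn ℂ
        (fun u : ℂ => ψ (c + u + I * (y:ℂ), (starRingEnd ℂ) c + u - I * (y:ℂ))) Ω :=
      hψ.comp hinner.differentiableOn hmem
    have h0 : (0:ℂ) ∈ Ω := by
      constructor <;>
        simp [mem_ball, Complex.dist_eq, hy]
    have hfreq : ∃ᶠ t in nhdsWithin (0 : ℂ) {(0:ℂ)}ᶜ,
        ψ (c + t + I * (y:ℂ), (starRingEnd ℂ) c + t - I * (y:ℂ)) = 0 := by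
      apply freq_real_zero (δ := r - |y|) (by linarith)
      intro x hx0 hxd
      have habs : ‖(x:ℂ) + I * (y:ℂ)‖ < r := by
        calc ‖(x:ℂ) + I * (y:ℂ)‖ ≤ ‖(x:ℂ)‖ + ‖I * (y:ℂ)‖ :=
              norm_add_le _ _
        _ = |x| + |y| := by simp
        _ < r := by linarith
      have hmemt : c + (x:ℂ) + I * (y:ℂ) ∈ ball c r := by
        rw [mem_ball, Complex.dist_eq, show c + (x:ℂ) + I * (y:ℂ) - c = (x:ℂ) + I * (y:ℂ) by ring]
        exact habs
      have hconj : (starRingEnd ℂ) (c + (x:ℂ) + I * (y:ℂ))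
          = (starRingEnd ℂ) c + (x:ℂ) - I * (y:ℂ) := by
        rw [map_add, map_add, map_mul, Complex.conj_ofReal, Complex.conj_ofReal, Complex.conj_I]
        ring
      have := hdiag _ hmemt
      rwa [hconj] at this
    have := (hsl.analyticOnNhd hΩo).eqOn_zero_of_preconnected_of_frequently_eq_zero hΩc h0 hfreq
    intro u h1 h2
    exact this ⟨h1, h2⟩
  -- Step B
  intro t ht s hs
  set τ : ℂ := t - c with hτ
  set σ : ℂ := s - (starRingEnd ℂ) c with hσ
  set u : ℂ := (τ + σ) / 2 with hu
  set v : ℂ := (τ - σ) / (2 * I) with hv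
  have huv1 : u + I * v = τ := by
    have hI : I ≠ 0 := Complex.I_ne_zero
    rw [hu, hv]
    field_simp
    ring
  have huv2 : u - I * v = σ := by
    have hI : I ≠ 0 := Complex.I_ne_zero
    rw [hu, hv]
    field_simp
    ring
  have hτr : ‖τ‖ < r := by rwa [hτ, ← Complex.dist_eq]
  have hσr : ‖σ‖ < r := by rwa [hσ, ← Complex.dist_eq]
  have habs1 : ∀ w : ℂ, ‖u + I * w‖ = dist w (I * u) := by
    intro w
    rw [Complex.dist_eq, show u + I * w = I * (w - I * u) by
      rw [mul_sub, ← mul_assoc, Complex.I_mul_I]; ring]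
    rw [norm_mul, Complex.norm_I, one_mul]
  have habs2 : ∀ w : ℂ, ‖u - I * w‖ = dist w (-(I * u)) := by
    intro w
    rw [Complex.dist_eq, sub_neg_eq_add, show u - I * w = -I * (w + I * u) by
      rw [neg_mul, mul_add, ← mul_assoc, Complex.I_mul_I]; ring]
    rw [norm_mul, norm_neg, Complex.norm_I, one_mul]
  have hur : ‖u‖ < r := by
    have : ‖u‖ ≤ (‖τ‖ + ‖σ‖) / 2 := by
      rw [hu, norm_div]
      simp only [Complex.norm_two]
      have := norm_add_le τ σ
      linarith [this]
    linarith
  set Ω' : Set ℂ := ball (I * u) r ∩ ball (-(I * u)) r with hΩ'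
  have hΩ'o : IsOpen Ω' := isOpen_ball.inter isOpen_ball
  have hΩ'c : IsPreconnected Ω' := ((convex_ball _ _).inter (convex_ball _ _)).isPreconnected
  have hmem' : ∀ w ∈ Ω',
      (c + u + I * w, (starRingEnd ℂ) c + u - I * w) ∈
        ball c r ×ˢ ball ((starRingEnd ℂ) c) r := by
    rintro w ⟨h1, h2⟩
    constructor
    · rw [mem_ball, Complex.dist_eq, show c + u + I * w - c = u + I * w by ring, habs1]
      exact h1
    · rw [mem_ball, Complex.dist_eq,
        show (starRingEnd ℂ) c + u - I * w - (starRingEnd ℂ) c = u - I * w by ring, habs2]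
      exact h2
  have hinner' : Differentiable ℂ
      (fun w : ℂ => (c + u + I * w, (starRingEnd ℂ) c + u - I * w)) := by
    apply Differentiable.prodMk
    · exact (differentiable_const _).add ((differentiable_const I).mul differentiable_id)
    · exact (differentiable_const _).sub ((differentiable_const I).mul differentiable_id)
  have hsl' : DifferentiableOn ℂ
      (fun w : ℂ => ψ (c + u + I * w, (starRingEnd ℂ) c + u - I * w)) Ω' :=
    hψ.comp hinner'.differentiableOn hmem'
  have h0' : (0:ℂ) ∈ Ω' := by
    constructor
    · rw [mem_ball, dist_comm, Complex.dist_eq, sub_zero, norm_mul, Complex.norm_I, one_mul]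
      exact hur
    · rw [mem_ball, dist_comm, Complex.dist_eq, sub_zero, norm_neg, norm_mul,
        Complex.norm_I, one_mul]
      exact hur
  have hfreq' : ∃ᶠ w in nhdsWithin (0 : ℂ) {(0:ℂ)}ᶜ,
      ψ (c + u + I * w, (starRingEnd ℂ) c + u - I * w) = 0 := by
    apply freq_real_zero (δ := r - ‖u‖) (by linarith)
    intro y hy0 hyd
    have hyr : |y| < r := by
      have := norm_nonneg u
      linarith
    apply stepA y hyr u
    · rw [Complex.dist_eq, sub_neg_eq_add]
      calc ‖u + I * (y:ℂ)‖ ≤ ‖u‖ + ‖I * (y:ℂ)‖ :=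
            norm_add_le _ _
        _ = ‖u‖ + |y| := by simp
        _ < r := by linarith
    · rw [Complex.dist_eq]
      calc ‖u - I * (y:ℂ)‖ ≤ ‖u‖ + ‖I * (y:ℂ)‖ := by
            simpa [sub_eq_add_neg, norm_neg] using norm_add_le u (-(I * (y:ℂ)))
        _ = ‖u‖ + |y| := by simp
        _ < r := by linarith
  have heq := (hsl'.analyticOnNhd hΩ'o).eqOn_zero_of_preconnected_of_frequently_eq_zero
    hΩ'c h0' hfreq'
  have hvΩ : v ∈ Ω' := by
    constructor
    · rw [mem_ball, ← habs1, huv1]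
      exact hτr
    · rw [mem_ball, ← habs2, huv2]
      exact hσr
  have hfin := heq hvΩ
  simp only [Pi.zero_apply] at hfin
  have e1 : c + u + I * v = t := by rw [add_assoc, huv1, hτ]; ring
  have e2 : (starRingEnd ℂ) c + u - I * v = s := by rw [add_sub_assoc, huv2, hσ]; ring
  rw [e1, e2] at hfin
  exact hfin

/-- If a holomorphic function on a ball in `ℂ^n` vanishes near the center,
it vanishes on the whole ball. -/
lemma ball_prop {n : ℕ} {F : (Fin n → ℂ) → ℂ} {q : Fin n → ℂ} {ε ρ : ℝ}
    (hε : 0 < ε) (hερ : ε ≤ ρ) (hF : DifferentiableOn ℂ F (ball q ρ))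
    (h0 : ∀ x ∈ ball q ε, F x = 0) : ∀ x ∈ ball q ρ, F x = 0 := by
  have hρ : (0:ℝ) < ρ := lt_of_lt_of_le hε hερ
  have key : ∀ j : ℕ, ∀ x ∈ ball q ρ,
      (∀ i : Fin n, j ≤ (i:ℕ) → dist (x i) (q i) < ε) → F x = 0 := by
    intro j
    induction j with
    | zero =>
      intro x hx hsmall
      exact h0 x (by rw [mem_ball, dist_pi_lt_iff hε]; exact fun i => hsmall i (Nat.zero_le _))
    | succ j ih =>
      intro x hx hsmall
      by_cases hj : j < n
      · set J : Fin n := ⟨j, hj⟩ with hJ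
        have hmem : ∀ t ∈ ball (q J) ρ, Function.update x J t ∈ ball q ρ := by
          intro t ht
          rw [mem_ball, dist_pi_lt_iff hρ]
          intro i
          rcases eq_or_ne i J with rfl | hi
          · simpa using ht
          · rw [Function.update_of_ne hi]
            exact lt_of_le_of_lt (dist_le_pi_dist x q i) hx
        have hup : Differentiable ℂ (Function.update x J) :=
          fun y => (hasFDerivAt_update x y).differentiableAt
        have hφ : DifferentiableOn ℂ (fun t => F (Function.update x J t)) (ball (q J) ρ) :=
          hF.comp hup.differentiableOn hmem
        have hzero : ∀ t ∈ ball (q J) ε, F (Function.update x J t) = 0 := by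
          intro t ht
          apply ih (Function.update x J t) (hmem t (ball_subset_ball hερ ht))
          intro i hi
          rcases eq_or_ne i J with rfl | hi'
          · simpa using ht
          · rw [Function.update_of_ne hi']
            apply hsmall i
            rcases Nat.lt_or_ge (i:ℕ) (j+1) with h' | h'
            · exfalso
              apply hi'
              have : (i:ℕ) = j := le_antisymm (Nat.lt_succ_iff.1 h') hi
              exact Fin.ext this
            · exact h'
        have hfreq : ∃ᶠ z in nhdsWithin (q J) {(q J)}ᶜ, F (Function.update x J z) = 0 := by
          apply Filter.Eventually.frequently
          apply Filter.Eventually.filter_mono nhdsWithin_le_nhds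
          filter_upwards [Metric.ball_mem_nhds (q J) hε] using hzero
        have heq := ((hφ.analyticOnNhd isOpen_ball).eqOn_zero_of_preconnected_of_frequently_eq_zero
          (convex_ball _ _).isPreconnected (mem_ball_self hρ) hfreq)
        have hxJ : x J ∈ ball (q J) ρ :=
          lt_of_le_of_lt (dist_le_pi_dist x q J) hx
        have := heq hxJ
        simpa [Function.update_eq_self] using this
      · exact ih x hx fun i hi =>
          absurd hi (Nat.not_le.2 (lt_of_lt_of_le i.2 (Nat.not_lt.1 hj)))
  intro x hx
  exact key n x hx fun i hi => absurd hi (Nat.not_le.2 i.2)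

/-- Product version of `ball_prop`. -/
lemma ball_prop2 {n m : ℕ} {F : ((Fin n → ℂ) × (Fin m → ℂ)) → ℂ}
    {p : (Fin n → ℂ) × (Fin m → ℂ)} {ε ρ : ℝ}
    (hε : 0 < ε) (hερ : ε ≤ ρ) (hF : DifferentiableOn ℂ F (ball p ρ))
    (h0 : ∀ x ∈ ball p ε, F x = 0) : ∀ x ∈ ball p ρ, F x = 0 := by
  have hb : ∀ r : ℝ, ball p.1 r ×ˢ ball p.2 r = ball p r := fun r => ball_prod_same p.1 p.2 r
  have step1 : ∀ y ∈ ball p.2 ε, ∀ z ∈ ball p.1 ρ, F (z, y) = 0 := by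
    intro y hy
    apply ball_prop hε hερ
    · apply hF.comp (differentiable_id.prodMk (differentiable_const y)).differentiableOn
      intro z hz
      rw [← hb ρ]
      exact ⟨hz, ball_subset_ball hερ hy⟩
    · intro z hz
      apply h0
      rw [← hb ε]
      exact ⟨hz, hy⟩
  have step2 : ∀ z ∈ ball p.1 ρ, ∀ y ∈ ball p.2 ρ, F (z, y) = 0 := by
    intro z hz
    apply ball_prop hε hερ
    · apply hF.comp ((differentiable_const z).prodMk differentiable_id).differentiableOn
      intro y hy
      rw [← hb ρ]
      exact ⟨hz, hy⟩
    · intro y hy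
      exact step1 y hy z hz
  intro x hx
  rw [← hb ρ] at hx
  exact step2 x.1 hx.1 x.2 hx.2

/-- Global identity theorem on a connected open subset of `ℂ^n × ℂ^m`, from
vanishing on a neighborhood of one point, for holomorphic functions. -/
lemma global_zero {n m : ℕ} {F : ((Fin n → ℂ) × (Fin m → ℂ)) → ℂ}
    {V : Set ((Fin n → ℂ) × (Fin m → ℂ))} (hVo : IsOpen V) (hVc : IsPreconnected V)
    (hF : DifferentiableOn ℂ F V) {p₀ : (Fin n → ℂ) × (Fin m → ℂ)} (hp₀ : p₀ ∈ V)
    (hnear : ∀ᶠ p in nhds p₀, F p = 0) : ∀ p ∈ V, F p = 0 := by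
  set S : Set ((Fin n → ℂ) × (Fin m → ℂ)) := {p | p ∈ V ∧ ∀ᶠ q in nhds p, F q = 0} with hS
  have hSo : IsOpen S := by
    apply IsOpen.inter hVo
    exact isOpen_setOf_eventually_nhds
  have hclos : closure S ∩ V ⊆ S := by
    rintro p ⟨hpc, hpV⟩
    rcases Metric.isOpen_iff.1 hVo p hpV with ⟨r, hr, hball⟩
    obtain ⟨q, hqS, hqd⟩ : ∃ q ∈ S, dist p q < r/2 := by
      rcases Metric.mem_closure_iff.1 hpc (r/2) (by positivity) with ⟨q, hq, hd⟩
      exact ⟨q, hq, hd⟩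
    obtain ⟨ε, hεpos, hεball⟩ := Metric.eventually_nhds_iff_ball.1 hqS.2
    set ε' : ℝ := min ε (r/2) with hε'
    have hε'pos : 0 < ε' := lt_min hεpos (by positivity)
    have hsub : ball q (r/2) ⊆ V := by
      intro x hx
      apply hball
      rw [mem_ball] at hx ⊢
      calc dist x p ≤ dist x q + dist q p := dist_triangle _ _ _
        _ < r/2 + r/2 := by rw [dist_comm q p]; exact add_lt_add hx hqd
        _ = r := by ring
    have hzero : ∀ x ∈ ball q (r/2), F x = 0 := by
      apply ball_prop2 hε'pos (min_le_right _ _) (hF.mono hsub)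
      intro x hx
      exact hεball x (ball_subset_ball (min_le_left _ _) hx)
    refine ⟨hpV, ?_⟩
    filter_upwards [Metric.ball_mem_nhds p (by linarith : (0:ℝ) < r/2 - dist p q)]
    intro x hx
    apply hzero
    rw [mem_ball] at hx ⊢
    calc dist x q ≤ dist x p + dist p q := dist_triangle _ _ _
      _ < (r/2 - dist p q) + dist p q := by linarith
      _ = r/2 := by ring
  have hsub : V ⊆ S :=
    hVc.subset_of_closure_inter_subset hSo ⟨p₀, hp₀, hp₀, hnear⟩
      (by intro x hx; exact hclos hx)
  intro p hp
  exact ((hsub hp).2).self_of_nhds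

/-- Local separation of variables: if `F` is holomorphic on a bidisc around
`(z₀, conj z₀)` and vanishes on the antidiagonal, it vanishes on the bidisc. -/
lemma diag_local {d : ℕ} {F : ((Fin d → ℂ) × (Fin d → ℂ)) → ℂ} {z₀ : Fin d → ℂ} {r : ℝ}
    (hr : 0 < r)
    (hF : DifferentiableOn ℂ F (ball z₀ r ×ˢ ball (fun i => (starRingEnd ℂ) (z₀ i)) r))
    (hdiag : ∀ z ∈ ball z₀ r, F (z, fun i => (starRingEnd ℂ) (z i)) = 0) :
    ∀ z ∈ ball z₀ r, ∀ w ∈ ball z₀ r, F (z, fun i => (starRingEnd ℂ) (w i)) = 0 := by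
  have hdc : ∀ a b : ℂ, dist ((starRingEnd ℂ) a) ((starRingEnd ℂ) b) = dist a b := by
    intro a b
    rw [Complex.dist_eq, Complex.dist_eq, ← map_sub, Complex.norm_conj]
  have key : ∀ j : ℕ, ∀ z ∈ ball z₀ r, ∀ w ∈ ball z₀ r,
      (∀ i : Fin d, j ≤ (i:ℕ) → w i = z i) → F (z, fun i => (starRingEnd ℂ) (w i)) = 0 := by
    intro j
    induction j with
    | zero =>
      intro z hz w hw hcoord
      have : w = z := funext fun i => hcoord i (Nat.zero_le _)
      rw [this]
      exact hdiag z hz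
    | succ j ih =>
      intro z hz w hw hcoord
      by_cases hj : j < d
      · set J : Fin d := ⟨j, hj⟩ with hJ
        set cw : Fin d → ℂ := fun i => (starRingEnd ℂ) (w i) with hcw
        set ψ : ℂ × ℂ → ℂ := fun ts => F (Function.update z J ts.1, Function.update cw J ts.2)
          with hψdef
        -- membership of updates
        have hmz : ∀ t ∈ ball (z₀ J) r, Function.update z J t ∈ ball z₀ r := by
          intro t ht
          rw [mem_ball, dist_pi_lt_iff hr]
          intro i
          rcases eq_or_ne i J with rfl | hi
          · simpa using ht
          · rw [Function.update_of_ne hi]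
            exact lt_of_le_of_lt (dist_le_pi_dist z z₀ i) hz
        have hmw : ∀ s ∈ ball ((starRingEnd ℂ) (z₀ J)) r,
            Function.update cw J s ∈ ball (fun i => (starRingEnd ℂ) (z₀ i)) r := by
          intro s hs
          rw [mem_ball, dist_pi_lt_iff hr]
          intro i
          rcases eq_or_ne i J with rfl | hi
          · simpa using hs
          · rw [Function.update_of_ne hi]
            have : dist (cw i) ((starRingEnd ℂ) (z₀ i)) = dist (w i) (z₀ i) := hdc _ _
            rw [this]
            exact lt_of_le_of_lt (dist_le_pi_dist w z₀ i) hw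
        have hψ : DifferentiableOn ℂ ψ
            (ball (z₀ J) r ×ˢ ball ((starRingEnd ℂ) (z₀ J)) r) := by
          apply hF.comp
          · apply Differentiable.differentiableOn
            apply Differentiable.prodMk
            · intro p
              exact ((hasFDerivAt_update z p.1).differentiableAt).comp p (differentiableAt_fst (𝕜 := ℂ) (p := p))
            · intro p
              exact ((hasFDerivAt_update cw p.2).differentiableAt).comp p (differentiableAt_snd (𝕜 := ℂ) (p := p))
          · rintro ⟨t, s⟩ ⟨ht, hs⟩
            exact ⟨hmz t ht, hmw s hs⟩
        have hψdiag : ∀ t ∈ ball (z₀ J) r, ψ (t, (starRingEnd ℂ) t) = 0 := by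
          intro t ht
          have hupd : Function.update cw J ((starRingEnd ℂ) t)
              = fun i => (starRingEnd ℂ) (Function.update w J t i) := by
            funext i
            rcases eq_or_ne i J with rfl | hi
            · simp
            · rw [Function.update_of_ne hi, Function.update_of_ne hi]
          show F (Function.update z J t, Function.update cw J ((starRingEnd ℂ) t)) = 0
          rw [hupd]
          apply ih (Function.update z J t) (hmz t ht) (Function.update w J t)
          · rw [mem_ball, dist_pi_lt_iff hr]
            intro i
            rcases eq_or_ne i J with rfl | hi
            · simpa using ht
            · rw [Function.update_of_ne hi]
              exact lt_of_le_of_lt (dist_le_pi_dist w z₀ i) hw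
          · intro i hi
            rcases eq_or_ne i J with rfl | hi'
            · simp
            · rw [Function.update_of_ne hi', Function.update_of_ne hi']
              apply hcoord i
              rcases Nat.lt_or_ge (i:ℕ) (j+1) with h' | h'
              · exact absurd (Fin.ext (le_antisymm (Nat.lt_succ_iff.1 h') hi)) hi'
              · exact h'
        have hconc := two_var_decouple hr hψ hψdiag (z J)
          (lt_of_le_of_lt (dist_le_pi_dist z z₀ J) hz)
          ((starRingEnd ℂ) (w J))
          (by rw [mem_ball, hdc]; exact lt_of_le_of_lt (dist_le_pi_dist w z₀ J) hw)
        have e1 : Function.update z J (z J) = z := Function.update_eq_self _ _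
        have e2 : Function.update cw J ((starRingEnd ℂ) (w J)) = cw :=
          Function.update_eq_self _ _
        show F (z, cw) = 0
        rw [← e1, ← e2]
        exact hconc
      · exact ih z hz w hw fun i hi =>
          absurd hi (Nat.not_le.2 (lt_of_lt_of_le i.2 (Nat.not_lt.1 hj)))
  intro z hz w hw
  exact key d z hz w hw fun i hi => absurd hi (Nat.not_le.2 i.2)

/-- If `g` is holomorphic on `U`, then `w ↦ conj (g (conj ∘ w))` is holomorphic on
the conjugate set. -/
lemma conj_diff {d : ℕ} {g : (Fin d → ℂ) → ℂ} {U : Set (Fin d → ℂ)} (hU : IsOpen U)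
    (hg : DifferentiableOn ℂ g U) :
    DifferentiableOn ℂ (fun w : Fin d → ℂ => (starRingEnd ℂ) (g (fun i => (starRingEnd ℂ) (w i))))
      {w : Fin d → ℂ | (fun i => (starRingEnd ℂ) (w i)) ∈ U} := by
  intro w hw
  set σf : (Fin d → ℂ) → (Fin d → ℂ) := fun v i => (starRingEnd ℂ) (v i) with hσf
  have hz : σf w ∈ U := hw
  have hgd : DifferentiableAt ℂ g (σf w) := (hg (σf w) hz).differentiableAt (hU.mem_nhds hz)
  set L : (Fin d → ℂ) →L[ℂ] ℂ := fderiv ℂ g (σf w) with hLdef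
  have hLd : HasFDerivAt g L (σf w) := hgd.hasFDerivAt
  set σ : (Fin d → ℂ) →L[ℝ] (Fin d → ℂ) :=
    ContinuousLinearMap.pi
      (fun i => ((Complex.conjCLE : ℂ →L[ℝ] ℂ)).comp (ContinuousLinearMap.proj i)) with hσdef
  have hσeq : ⇑σ = σf := by
    funext v i
    simp [hσdef, hσf, Complex.conjCLE_apply]
  have hσadd : ∀ a b : Fin d → ℂ, σf (a + b) = σf a + σf b := by
    intro a b; funext i
    simp [hσf]
  have hσsmul : ∀ (a : ℂ) (v : Fin d → ℂ), σf (a • v) = (starRingEnd ℂ) a • σf v := by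
    intro a v; funext i
    simp [hσf]
  let Mlin : (Fin d → ℂ) →ₗ[ℂ] ℂ :=
    { toFun := fun v => (starRingEnd ℂ) (L (σf v))
      map_add' := fun a b => by
        show (starRingEnd ℂ) (L (σf (a + b)))
            = (starRingEnd ℂ) (L (σf a)) + (starRingEnd ℂ) (L (σf b))
        rw [hσadd, map_add, map_add]
      map_smul' := fun a v => by
        show (starRingEnd ℂ) (L (σf (a • v))) = (RingHom.id ℂ) a • (starRingEnd ℂ) (L (σf v))
        rw [hσsmul, map_smul, smul_eq_mul, map_mul]
        simp }
  let M : (Fin d → ℂ) →L[ℂ] ℂ := LinearMap.toContinuousLinearMap Mlin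
  have hσd : HasFDerivAt σf σ w := by
    have h := σ.hasFDerivAt (x := w)
    rwa [hσeq] at h
  have h2 := HasFDerivAt.comp w (hLd.restrictScalars ℝ) hσd
  have h3 := HasFDerivAt.comp w ((Complex.conjCLE : ℂ →L[ℝ] ℂ)).hasFDerivAt h2
  have hfun : (⇑(Complex.conjCLE : ℂ →L[ℝ] ℂ) ∘ (g ∘ σf))
      = fun v => (starRingEnd ℂ) (g (σf v)) := by
    funext v
    simp [Function.comp, Complex.conjCLE_apply]
  rw [hfun] at h3
  have hH : M.restrictScalars ℝ
      = ((Complex.conjCLE : ℂ →L[ℝ] ℂ)).comp (((L.restrictScalars ℝ)).comp σ) := by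
    apply ContinuousLinearMap.ext
    intro v
    simp [M, Mlin, hσeq, Complex.conjCLE_apply]
  have h5 : HasFDerivAt (fun v => (starRingEnd ℂ) (g (σf v))) M w :=
    hasFDerivAt_of_restrictScalars ℝ h3 hH
  exact h5.differentiableAt.differentiableWithinAt

/-- If `f₁,…,f_k, g₁,…,g_k` are holomorphic on a connected open
`U ⊆ ℂ^d` and `∑ fᵢ(z) ⋅ conj(gᵢ(z)) = 0` on `U`, then
`∑ fᵢ(z) ⋅ conj(gᵢ(w)) = 0` for all `z, w ∈ U`. -/
theorem stmt_2 (d k : ℕ) (U : Set (Fin d → ℂ)) (hUo : IsOpen U)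
    (hUc : IsConnected U)
    (f g : Fin k → (Fin d → ℂ) → ℂ)
    (hf : ∀ i, DifferentiableOn ℂ (f i) U)
    (hg : ∀ i, DifferentiableOn ℂ (g i) U)
    (h : ∀ z ∈ U, ∑ i, f i z * (starRingEnd ℂ) (g i z) = 0) :
    ∀ z ∈ U, ∀ w ∈ U, ∑ i, f i z * (starRingEnd ℂ) (g i w) = 0 := by
  obtain ⟨z₀, hz₀⟩ := hUc.nonempty
  set σ : (Fin d → ℂ) → (Fin d → ℂ) := fun z i => (starRingEnd ℂ) (z i) with hσ
  have hσinv : ∀ z, σ (σ z) = z := by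
    intro z; funext i; simp [hσ]
  have hσcont : Continuous σ :=
    continuous_pi fun i => Complex.continuous_conj.comp (continuous_apply i)
  have hdist : ∀ a b : ℂ, dist ((starRingEnd ℂ) a) b = dist a ((starRingEnd ℂ) b) := by
    intro a b
    rw [Complex.dist_eq, Complex.dist_eq,
      show (starRingEnd ℂ) a - b = (starRingEnd ℂ) (a - (starRingEnd ℂ) b) by
        rw [map_sub, Complex.conj_conj],
      Complex.norm_conj]
  set Us : Set (Fin d → ℂ) := {w | σ w ∈ U} with hUs
  have hUso : IsOpen Us := hUo.preimage hσcont
  have hUsc : IsConnected Us := by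
    have himg : σ '' U = Us := by
      ext w
      constructor
      · rintro ⟨z, hz, rfl⟩
        show σ (σ z) ∈ U
        rw [hσinv]; exact hz
      · intro hw
        exact ⟨σ w, hw, hσinv w⟩
    rw [← himg]
    exact hUc.image σ hσcont.continuousOn
  set V : Set ((Fin d → ℂ) × (Fin d → ℂ)) := U ×ˢ Us with hV
  have hVo : IsOpen V := hUo.prod hUso
  have hVc : IsPreconnected V := (hUc.prod hUsc).isPreconnected
  set F : ((Fin d → ℂ) × (Fin d → ℂ)) → ℂ :=
    fun p => ∑ i, f i p.1 * (starRingEnd ℂ) (g i (σ p.2)) with hF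
  have hFd : DifferentiableOn ℂ F V := by
    apply DifferentiableOn.fun_sum
    intro i _
    apply DifferentiableOn.mul
    · exact (hf i).comp differentiable_fst.differentiableOn fun p hp => hp.1
    · exact (conj_diff hUo (hg i)).comp differentiable_snd.differentiableOn fun p hp => hp.2
  have hdiagV : ∀ z ∈ U, F (z, σ z) = 0 := by
    intro z hz
    show (∑ i, f i z * (starRingEnd ℂ) (g i (σ (σ z)))) = 0
    rw [hσinv]
    exact h z hz
  rcases Metric.isOpen_iff.1 hUo z₀ hz₀ with ⟨r, hr, hball⟩
  have hballs : ∀ w ∈ ball (σ z₀) r, σ w ∈ ball z₀ r := by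
    intro w hw
    rw [mem_ball, dist_pi_lt_iff hr] at hw ⊢
    intro i
    have : dist (σ w i) (z₀ i) = dist (w i) (σ z₀ i) := hdist (w i) (z₀ i)
    rw [this]
    exact hw i
  have hprod : ball z₀ r ×ˢ ball (σ z₀) r ⊆ V := by
    rintro ⟨a, b⟩ ⟨ha, hb⟩
    exact ⟨hball ha, show σ b ∈ U from hball (hballs b hb)⟩
  have hloc := diag_local hr (hFd.mono hprod) (fun z hz => hdiagV z (hball hz))
  have hz₀s : σ z₀ ∈ Us := by
    show σ (σ z₀) ∈ U
    rw [hσinv]; exact hz₀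
  have hnear : ∀ᶠ p in nhds ((z₀, σ z₀) : (Fin d → ℂ) × (Fin d → ℂ)), F p = 0 := by
    filter_upwards [prod_mem_nhds (ball_mem_nhds z₀ hr) (ball_mem_nhds (σ z₀) hr)]
    rintro ⟨z, w⟩ ⟨h1, h2⟩
    have hw' : σ w ∈ ball z₀ r := hballs w h2
    have := hloc z h1 (σ w) hw'
    rwa [show (fun i => (starRingEnd ℂ) (σ w i)) = w from funext fun i => by simp [hσ]] at this
  have hglob := global_zero hVo hVc hFd (⟨hz₀, hz₀s⟩ : (z₀, σ z₀) ∈ V) hnear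
  intro z hz w hw
  have hmem : ((z, σ w) : (Fin d → ℂ) × (Fin d → ℂ)) ∈ V := by
    refine ⟨hz, ?_⟩
    show σ (σ w) ∈ U
    rw [hσinv]; exact hw
  have := hglob _ hmem
  show ∑ i, f i z * (starRingEnd ℂ) (g i w) = 0
  have hrw : F (z, σ w) = ∑ i, f i z * (starRingEnd ℂ) (g i w) := by
    show (∑ i, f i z * (starRingEnd ℂ) (g i (σ (σ w)))) = _
    rw [hσinv]
  rwa [hrw] at this
end

section
/- Let U ⊆ ℝ^m be an open set and let f : ℝ^m → ℝ^n be continuously differentiable on U. Suppose there is a dense open subset U′ ⊆ U such that for every x ∈ U′ the derivative of f at x (as a linear map ℝ^m → ℝ^n) is surjective. Then for every dense subset Z ⊆ ℝ^n, the set U ∩ f⁻¹(Z) is dense in U. -/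
/-- If `f` is `C¹` on an open set `U ⊆ ℝ^m` and its derivative is
surjective at every point of a dense open subset `U' ⊆ U`, then for every dense
`Z ⊆ ℝ^n` the set `U ∩ f⁻¹(Z)` is dense in `U`. -/
theorem stmt_6 (m n : ℕ) (U : Set (EuclideanSpace ℝ (Fin m))) (hU : IsOpen U)
    (f : EuclideanSpace ℝ (Fin m) → EuclideanSpace ℝ (Fin n))
    (hf : ContDiffOn ℝ 1 f U)
    (U' : Set (EuclideanSpace ℝ (Fin m))) (hU'o : IsOpen U') (hU'U : U' ⊆ U)
    (hU'd : U ⊆ closure U')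
    (hsurj : ∀ x ∈ U', Function.Surjective (fderiv ℝ f x)) :
    ∀ Z : Set (EuclideanSpace ℝ (Fin n)), Dense Z →
      U ⊆ closure (U ∩ f ⁻¹' Z) := by
  intro Z hZ x hx
  rw [mem_closure_iff_nhds]
  intro t ht
  -- W = interior t ∩ U is an open neighborhood of x
  have hW : IsOpen (interior t ∩ U) := isOpen_interior.inter hU
  have hxW : x ∈ interior t ∩ U := ⟨mem_interior_iff_mem_nhds.2 ht, hx⟩
  -- it meets U'
  have hmeet : ((interior t ∩ U) ∩ U').Nonempty := by
    have := hU'd hx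
    rw [mem_closure_iff_nhds] at this
    exact this _ (hW.mem_nhds hxW)
  obtain ⟨x', hx'W, hx'U'⟩ := hmeet
  have hx'U : x' ∈ U := hx'W.2
  -- strict derivative at x'
  have hcd : ContDiffAt ℝ 1 f x' := hf.contDiffAt (hU.mem_nhds hx'U)
  have hstrict : HasStrictFDerivAt f (fderiv ℝ f x') x' :=
    hcd.hasStrictFDerivAt one_ne_zero
  have hrange : LinearMap.range (fderiv ℝ f x') = ⊤ :=
    LinearMap.range_eq_top.2 (by exact hsurj x' hx'U')
  have hmap : Filter.map f (nhds x') = nhds (f x') :=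
    hstrict.map_nhds_eq_of_surj hrange
  -- f '' W is a neighborhood of f x'
  have hWnhds : (interior t ∩ U) ∈ nhds x' := hW.mem_nhds hx'W
  have himg : f '' (interior t ∩ U) ∈ nhds (f x') := by
    rw [← hmap]
    exact Filter.image_mem_map hWnhds
  -- Z is dense, so it meets this neighborhood
  have : (f '' (interior t ∩ U) ∩ Z).Nonempty := by
    have := hZ (f x')
    rw [mem_closure_iff_nhds] at this
    exact this _ himg
  obtain ⟨z, ⟨y, ⟨hyt, hyU⟩, hyz⟩, hzZ⟩ := this
  exact ⟨y, interior_subset hyt, hyU, by rw [Set.mem_preimage, hyz]; exact hzZ⟩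
end

section
/- Let U ⊆ ℝ^m be a connected open set and let f : ℝ^m → ℝ^n be real-analytic on a neighbourhood of U. If the derivative of f is surjective at some point of U, then the set of points x ∈ U at which the derivative of f is surjective is open and dense in U. -/
open Function Matrix

/-- A square real matrix has full rank iff its determinant is nonzero. -/
lemma aux_det_rank {k : ℕ} (B : Matrix (Fin k) (Fin k) ℝ) :
    B.rank = k ↔ B.det ≠ 0 := by
  constructor
  · intro h hdet
    have hsurj : Function.Surjective B.mulVec := by
      have htop : LinearMap.range B.mulVecLin = ⊤ := by
        apply Submodule.eq_top_of_finrank_eq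
        have : B.rank = Module.finrank ℝ (LinearMap.range B.mulVecLin) := rfl
        rw [← this, h, Module.finrank_fin_fun]
      intro v
      obtain ⟨w, hw⟩ := LinearMap.range_eq_top.mp htop v
      exact ⟨w, hw⟩
    have hu : IsUnit B := Matrix.mulVec_surjective_iff_isUnit.mp hsurj
    exact ((Matrix.isUnit_iff_isUnit_det B).mp hu).ne_zero hdet
  · intro h
    have hu : IsUnit B := (Matrix.isUnit_iff_isUnit_det B).mpr (isUnit_iff_ne_zero.mpr h)
    simpa using Matrix.rank_of_isUnit B hu

/-- The matrix of a continuous linear map between Euclidean spaces w.r.t. the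
standard bases. -/
noncomputable def matrixOf {m n : ℕ}
    (L : EuclideanSpace ℝ (Fin m) →L[ℝ] EuclideanSpace ℝ (Fin n)) :
    Matrix (Fin n) (Fin m) ℝ :=
  LinearMap.toMatrix (EuclideanSpace.basisFun (Fin m) ℝ).toBasis
    (EuclideanSpace.basisFun (Fin n) ℝ).toBasis
    (L : EuclideanSpace ℝ (Fin m) →ₗ[ℝ] EuclideanSpace ℝ (Fin n))

lemma aux_surj {m n : ℕ}
    (L : EuclideanSpace ℝ (Fin m) →L[ℝ] EuclideanSpace ℝ (Fin n)) :
    Function.Surjective L ↔ (matrixOf L * (matrixOf L)ᵀ).det ≠ 0 := by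
  set bm := (EuclideanSpace.basisFun (Fin m) ℝ).toBasis
  set bn := (EuclideanSpace.basisFun (Fin n) ℝ).toBasis
  have h1 : (matrixOf L).rank =
      Module.finrank ℝ (LinearMap.range
        (L : EuclideanSpace ℝ (Fin m) →ₗ[ℝ] EuclideanSpace ℝ (Fin n))) := by
    rw [matrixOf, Matrix.rank_eq_finrank_range_toLin _ bn bm, Matrix.toLin_toMatrix]
  have hcoe : Function.Surjective L ↔
      Function.Surjective (L : EuclideanSpace ℝ (Fin m) →ₗ[ℝ] EuclideanSpace ℝ (Fin n)) := by
    simp [ContinuousLinearMap.coe_coe]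
  constructor
  · intro hs
    have htop : LinearMap.range
        (L : EuclideanSpace ℝ (Fin m) →ₗ[ℝ] EuclideanSpace ℝ (Fin n)) = ⊤ :=
      LinearMap.range_eq_top.mpr (hcoe.mp hs)
    have hr : (matrixOf L).rank = n := by
      rw [h1, htop, finrank_top, finrank_euclideanSpace_fin]
    have hr2 : (matrixOf L * (matrixOf L)ᵀ).rank = n := by
      rw [Matrix.rank_self_mul_transpose, hr]
    exact (aux_det_rank _).mp hr2
  · intro hd
    have hr2 : (matrixOf L * (matrixOf L)ᵀ).rank = n := (aux_det_rank _).mpr hd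
    have hr : (matrixOf L).rank = n := by
      rwa [Matrix.rank_self_mul_transpose] at hr2
    have htop : LinearMap.range
        (L : EuclideanSpace ℝ (Fin m) →ₗ[ℝ] EuclideanSpace ℝ (Fin n)) = ⊤ := by
      apply Submodule.eq_top_of_finrank_eq
      rw [← h1, hr, finrank_euclideanSpace_fin]
    exact hcoe.mpr (LinearMap.range_eq_top.mp htop)

lemma aux_entry {m n : ℕ} {U : Set (EuclideanSpace ℝ (Fin m))}
    {f : EuclideanSpace ℝ (Fin m) → EuclideanSpace ℝ (Fin n)}
    (hd : AnalyticOnNhd ℝ (fderiv ℝ f) U) (i : Fin n) (j : Fin m) :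
    AnalyticOnNhd ℝ (fun x => matrixOf (fderiv ℝ f x) i j) U := by
  have heq : (fun x => matrixOf (fderiv ℝ f x) i j) =
      ((EuclideanSpace.proj i).comp
        (ContinuousLinearMap.apply ℝ (EuclideanSpace ℝ (Fin n))
          ((EuclideanSpace.basisFun (Fin m) ℝ) j))) ∘ (fderiv ℝ f) := by
    funext x
    simp [matrixOf, LinearMap.toMatrix_apply, OrthonormalBasis.coe_toBasis,
      OrthonormalBasis.coe_toBasis_repr_apply, EuclideanSpace.basisFun_repr]
  rw [heq]
  exact ContinuousLinearMap.comp_analyticOnNhd _ hd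

lemma aux_det_analytic {m k : ℕ} {U : Set (EuclideanSpace ℝ (Fin m))}
    {M : EuclideanSpace ℝ (Fin m) → Matrix (Fin k) (Fin k) ℝ}
    (h : ∀ i j, AnalyticOnNhd ℝ (fun x => M x i j) U) :
    AnalyticOnNhd ℝ (fun x => (M x).det) U := by
  have heq : (fun x => (M x).det) =
      fun x => ∑ σ : Equiv.Perm (Fin k),
        ((Equiv.Perm.sign σ : ℤ) : ℝ) * ∏ i, M x (σ i) i := by
    funext x
    exact Matrix.det_apply' _
  rw [heq]
  exact Finset.analyticOnNhd_fun_sum _ fun σ _ =>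
    (analyticOnNhd_const).mul (Finset.analyticOnNhd_fun_prod _ fun i _ => h (σ i) i)

/-- If `f` is real-analytic on a connected open set `U ⊆ ℝ^m` and
its derivative is surjective at some point of `U`, then the set of points of
`U` where the derivative is surjective is open and dense in `U`. -/
theorem stmt_7 (m n : ℕ) (U : Set (EuclideanSpace ℝ (Fin m)))
    (hUo : IsOpen U) (hUc : IsConnected U)
    (f : EuclideanSpace ℝ (Fin m) → EuclideanSpace ℝ (Fin n))
    (hf : AnalyticOnNhd ℝ f U)
    (hx : ∃ x ∈ U, Function.Surjective (fderiv ℝ f x)) :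
    IsOpen {x | x ∈ U ∧ Function.Surjective (fderiv ℝ f x)} ∧
      U ⊆ closure {x | x ∈ U ∧ Function.Surjective (fderiv ℝ f x)} := by
  classical
  obtain ⟨x₀, hx₀U, hx₀s⟩ := hx
  have hd : AnalyticOnNhd ℝ (fderiv ℝ f) U := hf.fderiv
  set g : EuclideanSpace ℝ (Fin m) → ℝ :=
    fun x => (matrixOf (fderiv ℝ f x) * (matrixOf (fderiv ℝ f x))ᵀ).det with hg
  have hganal : AnalyticOnNhd ℝ g U := by
    apply aux_det_analytic
    intro i j
    have heq : (fun x => (matrixOf (fderiv ℝ f x) * (matrixOf (fderiv ℝ f x))ᵀ) i j)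
        = fun x => ∑ l, matrixOf (fderiv ℝ f x) i l * matrixOf (fderiv ℝ f x) j l := by
      funext x
      simp [Matrix.mul_apply, Matrix.transpose_apply]
    rw [heq]
    exact Finset.analyticOnNhd_fun_sum _ fun l _ =>
      (aux_entry hd i l).mul (aux_entry hd j l)
  have hiff : ∀ x ∈ U, (Function.Surjective (fderiv ℝ f x) ↔ g x ≠ 0) :=
    fun x _ => aux_surj _
  have hopen : IsOpen {x | x ∈ U ∧ Function.Surjective (fderiv ℝ f x)} := by
    have hset : {x | x ∈ U ∧ Function.Surjective (fderiv ℝ f x)} = U ∩ g ⁻¹' {0}ᶜ := by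
      ext x
      simp only [Set.mem_setOf_eq, Set.mem_inter_iff, Set.mem_preimage,
        Set.mem_compl_iff, Set.mem_singleton_iff]
      constructor
      · rintro ⟨h1, h2⟩; exact ⟨h1, (hiff x h1).mp h2⟩
      · rintro ⟨h1, h2⟩; exact ⟨h1, (hiff x h1).mpr h2⟩
    rw [hset]
    exact (hganal.continuousOn).isOpen_inter_preimage hUo isOpen_compl_singleton
  refine ⟨hopen, ?_⟩
  intro y hyU
  by_contra hyc
  rw [mem_closure_iff] at hyc
  push_neg at hyc
  obtain ⟨V, hVo, hyV, hVdisj⟩ := hyc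
  have hev : g =ᶠ[nhds y] 0 := by
    have hmem : V ∩ U ∈ nhds y := (hVo.inter hUo).mem_nhds ⟨hyV, hyU⟩
    filter_upwards [hmem] with z hz
    have hns : ¬ Function.Surjective (fderiv ℝ f z) := by
      intro hs
      have : z ∈ V ∩ {x | x ∈ U ∧ Function.Surjective (fderiv ℝ f x)} :=
        ⟨hz.1, hz.2, hs⟩
      rw [hVdisj] at this
      exact this
    by_contra hgz
    exact hns ((hiff z hz.2).mpr hgz)
  have hz0 := hganal.eqOn_zero_of_preconnected_of_eventuallyEq_zero
    hUc.isPreconnected hyU hev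
  exact (hiff x₀ hx₀U).mp hx₀s (hz0 hx₀U)
end

section
/- Fix n ≥ 1 and a natural number k. The set of coefficient vectors s = (s₀, …, s_{n−1}) ∈ ℝ^n such that the monic polynomial f_s(x) = x^n + s_{n−1}x^{n−1} + ⋯ + s₁x + s₀ is separable (has no multiple complex root) and has exactly k real roots is an open subset of ℝ^n. -/
open Polynomial

/-- The monic polynomial `x^n + s_{n-1} x^{n-1} + ⋯ + s₁ x + s₀` attached to a
coefficient vector `s ∈ ℝ^n`. -/
noncomputable def monicPolyOfCoeffs (n : ℕ) (s : Fin n → ℝ) : Polynomial ℝ :=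
  X ^ n + ∑ i : Fin n, C (s i) * X ^ (i : ℕ)

lemma eval_mpc (n : ℕ) (s : Fin n → ℝ) (x : ℝ) :
    eval x (monicPolyOfCoeffs n s) = x ^ n + ∑ i : Fin n, s i * x ^ (i : ℕ) := by
  simp [monicPolyOfCoeffs, eval_finset_sum]

lemma eval_deriv_mpc (n : ℕ) (s : Fin n → ℝ) (x : ℝ) :
    eval x (derivative (monicPolyOfCoeffs n s)) =
      n * x ^ (n - 1) + ∑ i : Fin n, s i * ((i : ℝ) * x ^ ((i : ℕ) - 1)) := by
  rw [monicPolyOfCoeffs, derivative_add, derivative_X_pow, map_sum]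
  rw [eval_add, eval_finset_sum]
  simp only [derivative_C_mul, derivative_X_pow, eval_mul, eval_C, eval_pow, eval_X,
    eval_natCast, eval_mul]

lemma eval_mpcC (n : ℕ) (s : Fin n → ℝ) (z : ℂ) :
    eval z ((monicPolyOfCoeffs n s).map (algebraMap ℝ ℂ)) =
      z ^ n + ∑ i : Fin n, (s i : ℂ) * z ^ (i : ℕ) := by
  simp [monicPolyOfCoeffs, Polynomial.map_sum, eval_finset_sum]

lemma eval_deriv_mpcC (n : ℕ) (s : Fin n → ℝ) (z : ℂ) :
    eval z (derivative ((monicPolyOfCoeffs n s).map (algebraMap ℝ ℂ))) =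
      n * z ^ (n - 1) + ∑ i : Fin n, (s i : ℂ) * ((i : ℂ) * z ^ ((i : ℕ) - 1)) := by
  rw [monicPolyOfCoeffs, Polynomial.map_add, Polynomial.map_pow, map_X, Polynomial.map_sum,
    derivative_add, derivative_X_pow, map_sum, eval_add, eval_finset_sum]
  simp only [Polynomial.map_mul, map_C, Polynomial.map_pow, map_X, derivative_C_mul,
    derivative_X_pow, eval_mul, eval_C, eval_pow, eval_X, eval_natCast]
  refine congrArg₂ (· + ·) rfl (Finset.sum_congr rfl fun i _ => ?_)
  simp only [algebraMap, RingHom.id_apply, RingHom.comp_apply, RingHom.coe_mk,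
    MonoidHom.coe_mk, OneHom.coe_mk, Complex.ofRealHom_eq_coe]
  try ring

lemma sum_mul_norm_le {𝕜 : Type*} [NormedField 𝕜] {m : ℕ} (a w : Fin m → 𝕜)
    {W : Fin m → ℝ} {d : ℝ} (hw : ∀ i, ‖w i‖ ≤ W i) (hd : ∀ i, ‖a i‖ ≤ d) :
    ‖∑ i : Fin m, a i * w i‖ ≤ d * ∑ i : Fin m, W i := by
  calc ‖∑ i : Fin m, a i * w i‖ ≤ ∑ i : Fin m, ‖a i * w i‖ := norm_sum_le _ _
    _ ≤ ∑ i : Fin m, d * W i := by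
        refine Finset.sum_le_sum fun i _ => ?_
        rw [norm_mul]
        exact mul_le_mul (hd i) (hw i) (norm_nonneg _) ((norm_nonneg _).trans (hd i))
    _ = d * ∑ i : Fin m, W i := by rw [Finset.mul_sum]

lemma cauchy_bound {𝕜 : Type*} [NormedField 𝕜] {n : ℕ} (hn : 1 ≤ n) (c : Fin n → 𝕜) {z : 𝕜}
    (hz : z ^ n + ∑ i : Fin n, c i * z ^ (i : ℕ) = 0) : ‖z‖ < 1 + ∑ i : Fin n, ‖c i‖ := by
  by_contra h
  push_neg at h
  have hs : (0:ℝ) ≤ ∑ i : Fin n, ‖c i‖ := Finset.sum_nonneg fun i _ => norm_nonneg _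
  have h1 : (1:ℝ) ≤ ‖z‖ := le_trans (by linarith) h
  have hzn : z ^ n = -∑ i : Fin n, c i * z ^ (i : ℕ) := by
    linear_combination hz
  have key : ‖z‖ ^ n ≤ (∑ i : Fin n, ‖c i‖) * ‖z‖ ^ (n - 1) := by
    calc ‖z‖ ^ n = ‖z ^ n‖ := (norm_pow _ _).symm
      _ = ‖∑ i : Fin n, c i * z ^ (i : ℕ)‖ := by rw [hzn, norm_neg]
      _ ≤ ∑ i : Fin n, ‖c i‖ * ‖z‖ ^ (n - 1) := by
          refine (norm_sum_le _ _).trans (Finset.sum_le_sum fun i _ => ?_)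
          rw [norm_mul, norm_pow]
          exact mul_le_mul_of_nonneg_left
            (pow_le_pow_right₀ h1 (by omega)) (norm_nonneg _)
      _ = (∑ i : Fin n, ‖c i‖) * ‖z‖ ^ (n - 1) := by rw [Finset.sum_mul]
  have hpow : ‖z‖ ^ n = ‖z‖ * ‖z‖ ^ (n - 1) := by
    rw [← pow_succ']
    congr 1
    omega
  have hp : (0:ℝ) < ‖z‖ ^ (n - 1) := pow_pos (by linarith) _
  have : ‖z‖ ≤ ∑ i : Fin n, ‖c i‖ := by
    rw [hpow] at key
    exact le_of_mul_le_mul_right key hp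
  linarith

lemma sep_of_no_common_root {f : ℝ[X]} (hf : f.map (algebraMap ℝ ℂ) ≠ 0)
    (h : ∀ z : ℂ, eval z (f.map (algebraMap ℝ ℂ)) = 0 →
      eval z (derivative (f.map (algebraMap ℝ ℂ))) = 0 → False) :
    f.Separable := by
  rw [← Polynomial.separable_map (algebraMap ℝ ℂ)]
  rw [Polynomial.separable_def]
  set p := f.map (algebraMap ℝ ℂ) with hp
  by_contra hc
  rw [← EuclideanDomain.gcd_isUnit_iff] at hc
  set g := EuclideanDomain.gcd p (derivative p) with hg
  have hg0 : g ≠ 0 := by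
    intro h0
    exact hf (EuclideanDomain.gcd_eq_zero_iff.mp h0).1
  have hdeg : g.degree ≠ 0 := fun hd => hc (isUnit_iff_degree_eq_zero.mpr hd)
  obtain ⟨z, hz⟩ := Complex.isAlgClosed.exists_root g hdeg
  exact h z (hz.dvd (EuclideanDomain.gcd_dvd_left _ _))
    (hz.dvd (EuclideanDomain.gcd_dvd_right _ _))

lemma no_common_root_of_sep {f : ℝ[X]} (hf : f.Separable) (z : ℂ)
    (h1 : eval z (f.map (algebraMap ℝ ℂ)) = 0)
    (h2 : eval z (derivative (f.map (algebraMap ℝ ℂ))) = 0) : False := by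
  have hs : (f.map (algebraMap ℝ ℂ)).Separable := hf.map
  obtain ⟨a, b, hab⟩ := hs
  have := congrArg (eval z) hab
  rw [derivative_map] at h2
  simp only [eval_add, eval_mul, h1, h2, derivative_map, mul_zero, add_zero, eval_one] at this
  exact zero_ne_one this

lemma deriv_ne_zero_of_sep {f : ℝ[X]} (hf : f.Separable) {x : ℝ} (hx : eval x f = 0) :
    eval x (derivative f) ≠ 0 := by
  obtain ⟨a, b, hab⟩ := hf
  intro h0
  have := congrArg (eval x) hab
  simp only [eval_add, eval_mul, hx, h0, mul_zero, add_zero, eval_one] at this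
  exact zero_ne_one this

set_option maxHeartbeats 1000000 in
/-- the set of `s ∈ ℝ^n` such that `f_s` is separable and has
exactly `k` real roots is open. -/
theorem stmt_8 (n k : ℕ) (hn : 1 ≤ n) :
    IsOpen {s : Fin n → ℝ |
      (monicPolyOfCoeffs n s).Separable ∧
      {x : ℝ | Polynomial.eval x (monicPolyOfCoeffs n s) = 0}.ncard = k} := by
  rw [Metric.isOpen_iff]
  rintro s₀ ⟨hsep, hcard⟩
  set f : ℝ[X] := monicPolyOfCoeffs n s₀ with hfdef
  set A : ℝ := ∑ i : Fin n, |s₀ i| with hAdef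
  have hA0 : 0 ≤ A := Finset.sum_nonneg fun i _ => abs_nonneg _
  have hn0 : (0:ℝ) ≤ n := Nat.cast_nonneg n
  set R : ℝ := A + n + 2 with hRdef
  have hR1 : (1:ℝ) ≤ R := by rw [hRdef]; linarith
  set C : ℝ := (∑ i : Fin n, (1 + (i:ℝ)) * R ^ (i:ℕ)) + 1 with hCdef
  have hC1 : (1:ℝ) ≤ C := le_add_of_nonneg_left (Finset.sum_nonneg fun i _ => by positivity)
  have hC0 : (0:ℝ) < C := lt_of_lt_of_le one_pos hC1
  -- coefficient sum bound for nearby s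
  have hcoeff : ∀ s : Fin n → ℝ, dist s s₀ ≤ 1 → ∑ i : Fin n, |s i| ≤ A + n := by
    intro s hs
    calc ∑ i : Fin n, |s i| ≤ ∑ i : Fin n, (|s₀ i| + 1) := by
          refine Finset.sum_le_sum fun i _ => ?_
          have h1 : dist (s i) (s₀ i) ≤ dist s s₀ := dist_le_pi_dist s s₀ i
          rw [Real.dist_eq] at h1
          have h2 := abs_sub_abs_le_abs_sub (s i) (s₀ i)
          linarith
      _ = A + n := by
          rw [Finset.sum_add_distrib, hAdef]
          simp
  -- f is nonzero
  have hf0 : f ≠ 0 := by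
    intro h0
    have he : eval R f = 0 := by rw [h0]; simp
    rw [hfdef, eval_mpc] at he
    have hcb := cauchy_bound hn s₀ he
    simp only [Real.norm_eq_abs] at hcb
    rw [abs_of_nonneg (by linarith)] at hcb
    rw [hRdef] at hcb
    linarith
  have hTfin : {x : ℝ | eval x f = 0}.Finite := f.finite_setOf_isRoot hf0
  set F : Finset ℝ := hTfin.toFinset with hFdef
  have hFmem : ∀ x, x ∈ F ↔ eval x f = 0 := fun x => by
    rw [hFdef, Set.Finite.mem_toFinset]; rfl
  -- real roots of f are small
  have hrootR : ∀ x ∈ F, |x| < 1 + A := by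
    intro x hx
    have he : eval x f = 0 := (hFmem x).mp hx
    rw [hfdef, eval_mpc] at he
    have hcb := cauchy_bound hn s₀ he
    simpa [Real.norm_eq_abs, hAdef] using hcb
  -- per-root radius
  have key : ∀ x : ℝ, ∃ δ : ℝ, 0 < δ ∧ δ ≤ 1 ∧ (x ∈ F →
      ((∀ y ∈ F, y ≠ x → 3 * δ ≤ |x - y|) ∧
       (∀ y : ℝ, |y - x| ≤ δ →
         |eval y (derivative f) - eval x (derivative f)| ≤ |eval x (derivative f)| / 2))) := by
    intro x
    by_cases hx : x ∈ F
    · have hsepeta : ∃ η > 0, ∀ y ∈ F, y ≠ x → η ≤ |x - y| := by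
        by_cases hne : (F.erase x).Nonempty
        · refine ⟨((F.erase x).image fun y => |x - y|).min' (hne.image _), ?_, ?_⟩
          · obtain ⟨y, hy, hval⟩ := Finset.mem_image.mp
              (Finset.min'_mem ((F.erase x).image fun y => |x - y|) (hne.image _))
            rw [← hval]
            have hyx : y ≠ x := (Finset.mem_erase.mp hy).1
            exact abs_pos.mpr (sub_ne_zero.mpr fun h => hyx h.symm)
          · intro y hy hyx
            exact Finset.min'_le _ _ (Finset.mem_image_of_mem _ (Finset.mem_erase.mpr ⟨hyx, hy⟩))
        · exact ⟨1, one_pos, fun y hy hyx => absurd ⟨y, Finset.mem_erase.mpr ⟨hyx, hy⟩⟩ hne⟩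
      obtain ⟨η, hη0, hη⟩ := hsepeta
      have hD : eval x (derivative f) ≠ 0 := deriv_ne_zero_of_sep hsep ((hFmem x).mp hx)
      have hcont : Continuous fun y : ℝ => eval y (derivative f) := (derivative f).continuous
      obtain ⟨θ, hθ0, hθ⟩ := Metric.continuous_iff.mp hcont x
        (|eval x (derivative f)| / 2) (by positivity)
      refine ⟨min (min (η/3) (θ/2)) 1, by positivity, min_le_right _ _, fun _ => ⟨?_, ?_⟩⟩
      · intro y hy hyx
        have h1 : min (min (η/3) (θ/2)) 1 ≤ η/3 := le_trans (min_le_left _ _) (min_le_left _ _)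
        linarith [hη y hy hyx]
      · intro y hy
        have h2 : min (min (η/3) (θ/2)) 1 ≤ θ/2 := le_trans (min_le_left _ _) (min_le_right _ _)
        have h3 : dist y x < θ := by rw [Real.dist_eq]; linarith
        have h4 := hθ y h3
        rw [Real.dist_eq] at h4
        linarith
    · exact ⟨1, one_pos, le_refl 1, fun h => absurd h hx⟩
  choose δ hδ0 hδ1 hδspec using key
  -- disjointness of intervals
  have hdisj : ∀ x ∈ F, ∀ y ∈ F, x ≠ y → ∀ t : ℝ, |t - x| ≤ δ x → |t - y| ≤ δ y → False := by
    intro x hx y hy hxy t htx hty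
    have h1 : 3 * δ x ≤ |x - y| := (hδspec x hx).1 y hy (Ne.symm hxy)
    have h2 : 3 * δ y ≤ |y - x| := (hδspec y hy).1 x hx hxy
    rw [abs_sub_comm y x] at h2
    have h3 : |x - y| ≤ |x - t| + |t - y| := abs_sub_le x t y
    rw [abs_sub_comm x t] at h3
    have := hδ0 x; have := hδ0 y
    linarith
  -- the compact set away from roots
  set K : Set ℝ := Set.Icc (-R) R \ ⋃ x ∈ F, Set.Ioo (x - δ x) (x + δ x) with hKdef
  have hKcomp : IsCompact K := isCompact_Icc.diff (isOpen_biUnion fun x _ => isOpen_Ioo)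
  have hRK : R ∈ K := by
    constructor
    · exact ⟨by linarith, le_refl R⟩
    · intro hmem
      simp only [Set.mem_iUnion, Set.mem_Ioo] at hmem
      obtain ⟨x, hxF, hx1, hx2⟩ := hmem
      have hxR := abs_lt.mp (hrootR x hxF)
      have := hδ1 x
      rw [hRdef] at hx1
      linarith [hx1]
  have hKroot : ∀ t ∈ K, eval t f ≠ 0 := by
    rintro t ⟨htIcc, htU⟩ h0
    apply htU
    have htF : t ∈ F := (hFmem t).mpr h0
    have h1 := hδ0 t
    exact Set.mem_biUnion htF ⟨by linarith, by linarith⟩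
  obtain ⟨t₀, ht₀K, ht₀min⟩ := hKcomp.exists_isMinOn ⟨R, hRK⟩
    ((continuous_abs.comp f.continuous).continuousOn)
  set mK : ℝ := |eval t₀ f| with hmKdef
  have hmK0 : 0 < mK := abs_pos.mpr (hKroot t₀ ht₀K)
  have hmKle : ∀ t ∈ K, mK ≤ |eval t f| := fun t ht => (isMinOn_iff.mp ht₀min) t ht
  -- complex minimum
  set P : ℂ[X] := f.map (algebraMap ℝ ℂ) with hPdef
  have hPcont : Continuous fun z : ℂ => ‖eval z P‖ + ‖eval z (derivative P)‖ :=
    (P.continuous.norm).add ((derivative P).continuous.norm)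
  obtain ⟨z₀, hz₀B, hz₀min⟩ := (isCompact_closedBall (0:ℂ) R).exists_isMinOn
    ⟨0, Metric.mem_closedBall_self (by linarith)⟩ hPcont.continuousOn
  set mC : ℝ := ‖eval z₀ P‖ + ‖eval z₀ (derivative P)‖ with hmCdef
  have hmCle : ∀ z ∈ Metric.closedBall (0:ℂ) R,
      mC ≤ ‖eval z P‖ + ‖eval z (derivative P)‖ := fun z hz => (isMinOn_iff.mp hz₀min) z hz
  have hmC0 : 0 < mC := by
    have h1 : (0:ℝ) ≤ ‖eval z₀ P‖ := norm_nonneg _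
    have h2 : (0:ℝ) ≤ ‖eval z₀ (derivative P)‖ := norm_nonneg _
    rcases eq_or_lt_of_le (add_nonneg h1 h2) with h | h
    · exfalso
      have e1 : ‖eval z₀ P‖ = 0 := by linarith
      have e2 : ‖eval z₀ (derivative P)‖ = 0 := by linarith
      exact no_common_root_of_sep hsep z₀ (norm_eq_zero.mp e1) (norm_eq_zero.mp e2)
    · exact h
  -- derivative floor
  obtain ⟨c, hc0, hcle⟩ : ∃ c : ℝ, 0 < c ∧ ∀ x ∈ F, c ≤ |eval x (derivative f)| / 4 := by
    refine ⟨(insert (1:ℝ) (F.image fun x => |eval x (derivative f)| / 4)).min'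
      (Finset.insert_nonempty _ _), ?_, ?_⟩
    · have hmem := Finset.min'_mem (insert (1:ℝ) (F.image fun x => |eval x (derivative f)| / 4))
        (Finset.insert_nonempty _ _)
      rw [Finset.mem_insert] at hmem
      rcases hmem with h | h
      · rw [h]; exact one_pos
      · obtain ⟨x, hxF, hxe⟩ := Finset.mem_image.mp h
        have hD : eval x (derivative f) ≠ 0 := deriv_ne_zero_of_sep hsep ((hFmem x).mp hxF)
        rw [← hxe]
        positivity
    · intro x hx
      exact Finset.min'_le _ _ (Finset.mem_insert_of_mem (Finset.mem_image_of_mem _ hx))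
  -- choose ε
  refine ⟨min 1 (min (mK / (2*C)) (min (c / C) (mC / (4*C)))),
    lt_min one_pos (lt_min (div_pos hmK0 (by linarith)) (lt_min (div_pos hc0 hC0)
      (div_pos hmC0 (by linarith)))), ?_⟩
  intro s hs
  rw [Metric.mem_ball] at hs
  set d : ℝ := dist s s₀ with hddef
  have hd0 : 0 ≤ d := dist_nonneg
  have hd1 : d < 1 := lt_of_lt_of_le hs (min_le_left _ _)
  have hdmK : d * C < mK / 2 := by
    have h : d < mK / (2*C) := lt_of_lt_of_le hs (le_trans (min_le_right _ _) (min_le_left _ _))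
    have := mul_lt_mul_of_pos_right h hC0
    rwa [div_mul_eq_mul_div, mul_comm (2:ℝ) C, ← div_div, mul_div_assoc,
      div_self (ne_of_gt hC0), mul_one] at this
  have hdc : d * C ≤ c := by
    have h : d < c / C := lt_of_lt_of_le hs
      (le_trans (min_le_right _ _) (le_trans (min_le_right _ _) (min_le_left _ _)))
    have := mul_lt_mul_of_pos_right h hC0
    rw [div_mul_cancel₀ _ (ne_of_gt hC0)] at this
    linarith
  have hdmC : d * C < mC / 4 := by
    have h : d < mC / (4*C) := lt_of_lt_of_le hs
      (le_trans (min_le_right _ _) (le_trans (min_le_right _ _) (min_le_right _ _)))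
    have := mul_lt_mul_of_pos_right h hC0
    rwa [div_mul_eq_mul_div, mul_comm (4:ℝ) C, ← div_div, mul_div_assoc,
      div_self (ne_of_gt hC0), mul_one] at this
  have hdi : ∀ i, |s i - s₀ i| ≤ d := fun i => by
    rw [← Real.dist_eq]; exact dist_le_pi_dist s s₀ i
  -- perturbation bounds
  have hWle : (∑ i : Fin n, (1 + (i:ℝ)) * R ^ (i:ℕ)) ≤ C := by rw [hCdef]; linarith
  have hB1 : ∀ x : ℝ, |x| ≤ R → |eval x (monicPolyOfCoeffs n s) - eval x f| ≤ d * C := by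
    intro x hx
    rw [hfdef, eval_mpc, eval_mpc]
    have heq : (x^n + ∑ i : Fin n, s i * x^(i:ℕ)) - (x^n + ∑ i : Fin n, s₀ i * x^(i:ℕ))
        = ∑ i : Fin n, (s i - s₀ i) * x^(i:ℕ) := by
      have h' : ∑ i : Fin n, (s i - s₀ i) * x ^ (i:ℕ)
          = ∑ i : Fin n, (s i * x^(i:ℕ) - s₀ i * x^(i:ℕ)) :=
        Finset.sum_congr rfl fun i _ => by ring
      rw [h', Finset.sum_sub_distrib]
      ring
    rw [heq]
    have hb := sum_mul_norm_le (𝕜 := ℝ) (fun i => s i - s₀ i) (fun i => x ^ (i:ℕ))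
      (W := fun i => (1 + (i:ℝ)) * R ^ (i:ℕ)) (d := d)
      (fun i => by
        rw [Real.norm_eq_abs, abs_pow]
        calc |x| ^ (i:ℕ) ≤ R ^ (i:ℕ) := pow_le_pow_left₀ (abs_nonneg x) hx _
          _ ≤ (1 + (i:ℝ)) * R ^ (i:ℕ) := le_mul_of_one_le_left (by positivity) (le_add_of_nonneg_right (Nat.cast_nonneg _)))
      (fun i => by rw [Real.norm_eq_abs]; exact hdi i)
    rw [Real.norm_eq_abs] at hb
    calc |∑ i : Fin n, (s i - s₀ i) * x^(i:ℕ)| ≤ d * ∑ i : Fin n, (1 + (i:ℝ)) * R ^ (i:ℕ) := hb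
      _ ≤ d * C := mul_le_mul_of_nonneg_left hWle hd0
  have hB2 : ∀ x : ℝ, |x| ≤ R →
      |eval x (derivative (monicPolyOfCoeffs n s)) - eval x (derivative f)| ≤ d * C := by
    intro x hx
    rw [hfdef, eval_deriv_mpc, eval_deriv_mpc]
    have heq : ((n:ℝ) * x^(n-1) + ∑ i : Fin n, s i * ((i:ℝ) * x^((i:ℕ)-1)))
        - ((n:ℝ) * x^(n-1) + ∑ i : Fin n, s₀ i * ((i:ℝ) * x^((i:ℕ)-1)))
        = ∑ i : Fin n, (s i - s₀ i) * ((i:ℝ) * x^((i:ℕ)-1)) := by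
      have h' : ∑ i : Fin n, (s i - s₀ i) * ((i:ℝ) * x^((i:ℕ)-1))
          = ∑ i : Fin n, (s i * ((i:ℝ) * x^((i:ℕ)-1)) - s₀ i * ((i:ℝ) * x^((i:ℕ)-1))) :=
        Finset.sum_congr rfl fun i _ => by ring
      rw [h', Finset.sum_sub_distrib]
      ring
    rw [heq]
    have hb := sum_mul_norm_le (𝕜 := ℝ) (fun i => s i - s₀ i)
      (fun i => (i:ℝ) * x ^ ((i:ℕ)-1))
      (W := fun i => (1 + (i:ℝ)) * R ^ (i:ℕ)) (d := d)
      (fun i => by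
        rw [Real.norm_eq_abs, abs_mul, abs_pow, Nat.abs_cast]
        have h1 : |x| ^ ((i:ℕ)-1) ≤ R ^ ((i:ℕ)-1) := pow_le_pow_left₀ (abs_nonneg x) hx _
        have h2 : R ^ ((i:ℕ)-1) ≤ R ^ (i:ℕ) := pow_le_pow_right₀ hR1 (Nat.sub_le _ _)
        have h3 : (0:ℝ) ≤ (i:ℝ) := Nat.cast_nonneg _
        have h4 : (0:ℝ) < R ^ (i:ℕ) := by positivity
        calc (i:ℝ) * |x| ^ ((i:ℕ)-1) ≤ (i:ℝ) * R ^ (i:ℕ) :=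
              mul_le_mul_of_nonneg_left (h1.trans h2) h3
          _ ≤ (1 + (i:ℝ)) * R ^ (i:ℕ) := by nlinarith)
      (fun i => by rw [Real.norm_eq_abs]; exact hdi i)
    rw [Real.norm_eq_abs] at hb
    calc |∑ i : Fin n, (s i - s₀ i) * ((i:ℝ) * x^((i:ℕ)-1))|
        ≤ d * ∑ i : Fin n, (1 + (i:ℝ)) * R ^ (i:ℕ) := hb
      _ ≤ d * C := mul_le_mul_of_nonneg_left hWle hd0
  have hB3 : ∀ z : ℂ, ‖z‖ ≤ R →
      ‖eval z ((monicPolyOfCoeffs n s).map (algebraMap ℝ ℂ)) - eval z P‖ ≤ d * C := by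
    intro z hz
    rw [hPdef, hfdef, eval_mpcC, eval_mpcC]
    have heq : (z^n + ∑ i : Fin n, (s i : ℂ) * z^(i:ℕ))
        - (z^n + ∑ i : Fin n, (s₀ i : ℂ) * z^(i:ℕ))
        = ∑ i : Fin n, ((s i : ℂ) - (s₀ i : ℂ)) * z^(i:ℕ) := by
      have h' : ∑ i : Fin n, ((s i : ℂ) - (s₀ i : ℂ)) * z^(i:ℕ)
          = ∑ i : Fin n, ((s i : ℂ) * z^(i:ℕ) - (s₀ i : ℂ) * z^(i:ℕ)) :=
        Finset.sum_congr rfl fun i _ => by ring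
      rw [h', Finset.sum_sub_distrib]
      ring
    rw [heq]
    have hb := sum_mul_norm_le (𝕜 := ℂ) (fun i => (s i : ℂ) - (s₀ i : ℂ))
      (fun i => z ^ (i:ℕ))
      (W := fun i => (1 + (i:ℝ)) * R ^ (i:ℕ)) (d := d)
      (fun i => by
        rw [norm_pow]
        calc ‖z‖ ^ (i:ℕ) ≤ R ^ (i:ℕ) := pow_le_pow_left₀ (norm_nonneg z) hz _
          _ ≤ (1 + (i:ℝ)) * R ^ (i:ℕ) :=
            le_mul_of_one_le_left (by positivity) (le_add_of_nonneg_right (Nat.cast_nonneg _)))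
      (fun i => by
        simp only [← Complex.ofReal_sub, Complex.norm_real, Real.norm_eq_abs]
        exact hdi i)
    calc ‖∑ i : Fin n, ((s i : ℂ) - (s₀ i : ℂ)) * z^(i:ℕ)‖
        ≤ d * ∑ i : Fin n, (1 + (i:ℝ)) * R ^ (i:ℕ) := hb
      _ ≤ d * C := mul_le_mul_of_nonneg_left hWle hd0
  have hB4 : ∀ z : ℂ, ‖z‖ ≤ R →
      ‖eval z (derivative ((monicPolyOfCoeffs n s).map (algebraMap ℝ ℂ)))
        - eval z (derivative P)‖ ≤ d * C := by
    intro z hz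
    rw [hPdef, hfdef, eval_deriv_mpcC, eval_deriv_mpcC]
    have heq : ((n:ℂ) * z^(n-1) + ∑ i : Fin n, (s i : ℂ) * ((i:ℂ) * z^((i:ℕ)-1)))
        - ((n:ℂ) * z^(n-1) + ∑ i : Fin n, (s₀ i : ℂ) * ((i:ℂ) * z^((i:ℕ)-1)))
        = ∑ i : Fin n, ((s i : ℂ) - (s₀ i : ℂ)) * ((i:ℂ) * z^((i:ℕ)-1)) := by
      have h' : ∑ i : Fin n, ((s i : ℂ) - (s₀ i : ℂ)) * ((i:ℂ) * z^((i:ℕ)-1))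
          = ∑ i : Fin n, ((s i : ℂ) * ((i:ℂ) * z^((i:ℕ)-1))
            - (s₀ i : ℂ) * ((i:ℂ) * z^((i:ℕ)-1))) :=
        Finset.sum_congr rfl fun i _ => by ring
      rw [h', Finset.sum_sub_distrib]
      ring
    rw [heq]
    have hb := sum_mul_norm_le (𝕜 := ℂ) (fun i => (s i : ℂ) - (s₀ i : ℂ))
      (fun i => (i:ℂ) * z ^ ((i:ℕ)-1))
      (W := fun i => (1 + (i:ℝ)) * R ^ (i:ℕ)) (d := d)
      (fun i => by
        rw [norm_mul, norm_pow]
        have hni : ‖((i:ℕ) : ℂ)‖ = (i:ℝ) := by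
          rw [Complex.norm_natCast]
        rw [hni]
        have h1 : ‖z‖ ^ ((i:ℕ)-1) ≤ R ^ ((i:ℕ)-1) := pow_le_pow_left₀ (norm_nonneg z) hz _
        have h2 : R ^ ((i:ℕ)-1) ≤ R ^ (i:ℕ) := pow_le_pow_right₀ hR1 (Nat.sub_le _ _)
        have h3 : (0:ℝ) ≤ (i:ℝ) := Nat.cast_nonneg _
        have h4 : (0:ℝ) < R ^ (i:ℕ) := by positivity
        calc (i:ℝ) * ‖z‖ ^ ((i:ℕ)-1) ≤ (i:ℝ) * R ^ (i:ℕ) :=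
              mul_le_mul_of_nonneg_left (h1.trans h2) h3
          _ ≤ (1 + (i:ℝ)) * R ^ (i:ℕ) := by nlinarith)
      (fun i => by
        simp only [← Complex.ofReal_sub, Complex.norm_real, Real.norm_eq_abs]
        exact hdi i)
    calc ‖∑ i : Fin n, ((s i : ℂ) - (s₀ i : ℂ)) * ((i:ℂ) * z^((i:ℕ)-1))‖
        ≤ d * ∑ i : Fin n, (1 + (i:ℝ)) * R ^ (i:ℕ) := hb
      _ ≤ d * C := mul_le_mul_of_nonneg_left hWle hd0
  -- root bounds for perturbed polynomial
  have hsd1 : dist s s₀ ≤ 1 := le_of_lt hd1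
  have hrootsR : ∀ x : ℝ, eval x (monicPolyOfCoeffs n s) = 0 → |x| < R - 1 := by
    intro x hx
    rw [eval_mpc] at hx
    have hcb := cauchy_bound hn s hx
    simp only [Real.norm_eq_abs] at hcb
    have := hcoeff s hsd1
    rw [hRdef]
    linarith
  have hrootsC : ∀ z : ℂ, eval z ((monicPolyOfCoeffs n s).map (algebraMap ℝ ℂ)) = 0 →
      ‖z‖ < R - 1 := by
    intro z hz
    rw [eval_mpcC] at hz
    have hcb := cauchy_bound hn (fun i => (s i : ℂ)) hz
    have he : ∑ i : Fin n, ‖((s i : ℂ))‖ = ∑ i : Fin n, |s i| := by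
      refine Finset.sum_congr rfl fun i _ => ?_
      rw [Complex.norm_real, Real.norm_eq_abs]
    rw [he] at hcb
    have := hcoeff s hsd1
    rw [hRdef]
    linarith
  -- separability of perturbed polynomial
  have hsep' : (monicPolyOfCoeffs n s).Separable := by
    apply sep_of_no_common_root
    · intro h0
      have he : eval (R:ℂ) ((monicPolyOfCoeffs n s).map (algebraMap ℝ ℂ)) = 0 := by
        rw [h0]; simp
      have := hrootsC _ he
      rw [Complex.norm_real, Real.norm_eq_abs, abs_of_nonneg (by linarith)] at this
      linarith
    · intro z h1 h2
      have hzR : ‖z‖ < R - 1 := hrootsC z h1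
      have hzB : z ∈ Metric.closedBall (0:ℂ) R := by
        rw [Metric.mem_closedBall, dist_zero_right]
        linarith
      have hmin := hmCle z hzB
      have e1 : ‖eval z P‖ ≤ d * C := by
        have := hB3 z (by linarith)
        rw [h1] at this
        rw [← norm_neg]
        simpa using this
      have e2 : ‖eval z (derivative P)‖ ≤ d * C := by
        have := hB4 z (by linarith)
        rw [h2] at this
        rw [← norm_neg]
        simpa using this
      have hfin : mC ≤ d * C + d * C := le_trans hmin (add_le_add e1 e2)
      clear_value mC C d P f
      linarith only [hfin, hdmC, hmC0]
  refine ⟨hsep', ?_⟩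
  have hn1 : (1:ℝ) ≤ n := by exact_mod_cast hn
  -- perturbed polynomial has no roots on K
  have hKs : ∀ t ∈ K, eval t (monicPolyOfCoeffs n s) ≠ 0 := by
    intro t htK h0
    have htR : |t| ≤ R := abs_le.mpr htK.1
    have hb := hB1 t htR
    rw [h0, zero_sub, abs_neg] at hb
    have hm := hmKle t htK
    clear_value mK C d f
    linarith only [hb, hm, hdmK, hmK0]
  -- in each interval around a root of f, exactly one root of the perturbation
  have hmono : ∀ x ∈ F,
      (∃ u ∈ Set.Ioo (x - δ x) (x + δ x), eval u (monicPolyOfCoeffs n s) = 0) ∧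
      Set.InjOn (fun u => eval u (monicPolyOfCoeffs n s)) (Set.Icc (x - δ x) (x + δ x)) := by
    intro x hxF
    have hx0 : eval x f = 0 := (hFmem x).mp hxF
    have hxA := abs_lt.mp (hrootR x hxF)
    have hδx0 := hδ0 x
    have hδx1 := hδ1 x
    have hIccR : ∀ u ∈ Set.Icc (x - δ x) (x + δ x), |u| ≤ R := by
      intro u hu
      rw [Set.mem_Icc] at hu
      rw [abs_le, hRdef]
      constructor <;> [linarith [hu.1]; linarith [hu.2]]
    set D := eval x (derivative f) with hDdef
    have hDne : D ≠ 0 := deriv_ne_zero_of_sep hsep hx0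
    have hf'near : ∀ u ∈ Set.Icc (x - δ x) (x + δ x),
        |eval u (derivative f) - D| ≤ |D| / 2 := by
      intro u hu
      rw [Set.mem_Icc] at hu
      exact (hδspec x hxF).2 u (abs_le.mpr ⟨by linarith [hu.1], by linarith [hu.2]⟩)
    have hcx : d * C ≤ |D| / 4 := le_trans hdc (hcle x hxF)
    have hps'near : ∀ u ∈ Set.Icc (x - δ x) (x + δ x),
        |eval u (derivative (monicPolyOfCoeffs n s)) - D| ≤ 3 * |D| / 4 := by
      intro u hu
      have h1 := hB2 u (hIccR u hu)
      have h2 := hf'near u hu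
      calc |eval u (derivative (monicPolyOfCoeffs n s)) - D|
          ≤ |eval u (derivative (monicPolyOfCoeffs n s)) - eval u (derivative f)|
            + |eval u (derivative f) - D| := abs_sub_le _ _ _
        _ ≤ 3 * |D| / 4 := by clear_value D C d f; linarith only [h1, h2, hcx, hd0, hC0]
    have hendK : ∀ t : ℝ, |t - x| = δ x → t ∈ K := by
      intro t ht
      have htb := abs_le.mp ht.le
      constructor
      · rw [Set.mem_Icc, hRdef]
        constructor <;> [linarith [htb.1]; linarith [htb.2]]
      · intro hmem
        simp only [Set.mem_iUnion, Set.mem_Ioo] at hmem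
        obtain ⟨w, hwF, hw1, hw2⟩ := hmem
        by_cases hwx : w = x
        · subst hwx
          have hlt : |t - w| < δ w := abs_lt.mpr ⟨by linarith, by linarith⟩
          exact absurd ht (ne_of_lt hlt)
        · exact hdisj x hxF w hwF (fun h => hwx h.symm) t ht.le
            (le_of_lt (abs_lt.mpr ⟨by linarith, by linarith⟩))
    have hep : x + δ x ∈ K := hendK _ (by rw [add_sub_cancel_left, abs_of_pos hδx0])
    have hem : x - δ x ∈ K := hendK _ (by
      have : x - δ x - x = -δ x := by ring
      rw [this, abs_neg, abs_of_pos hδx0])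
    have hmKp := hmKle _ hep
    have hmKm := hmKle _ hem
    have hxmem : x ∈ Set.Icc (x - δ x) (x + δ x) :=
      Set.mem_Icc.mpr ⟨by linarith, by linarith⟩
    have hmem_m : x - δ x ∈ Set.Icc (x - δ x) (x + δ x) :=
      Set.mem_Icc.mpr ⟨le_refl _, by linarith⟩
    have hmem_p : x + δ x ∈ Set.Icc (x - δ x) (x + δ x) :=
      Set.mem_Icc.mpr ⟨by linarith, le_refl _⟩
    have hBm := hB1 (x - δ x) (hIccR _ hmem_m)
    have hBp := hB1 (x + δ x) (hIccR _ hmem_p)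
    rcases hDne.lt_or_gt with hDneg | hDpos
    · -- D < 0
      have habsD : |D| = -D := abs_of_neg hDneg
      have hf'neg : ∀ u ∈ Set.Icc (x - δ x) (x + δ x), eval u (derivative f) < 0 := by
        intro u hu
        have h := abs_le.mp (hf'near u hu)
        clear_value D f
        rw [habsD] at h
        linarith only [h.2, hDneg]
      have hanti : StrictAntiOn (fun u => eval u f) (Set.Icc (x - δ x) (x + δ x)) := by
        apply strictAntiOn_of_deriv_neg (convex_Icc _ _) (f.continuous.continuousOn)
        intro u hu
        rw [interior_Icc] at hu
        rw [Polynomial.deriv]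
        exact hf'neg u (Set.mem_Icc_of_Ioo hu)
      have hfm : mK ≤ eval (x - δ x) f := by
        have h := hanti hmem_m hxmem (by linarith)
        simp only [hx0] at h
        have := hmKm
        rw [abs_of_pos h] at this
        exact this
      have hfp : eval (x + δ x) f ≤ -mK := by
        have h := hanti hxmem hmem_p (by linarith)
        simp only [hx0] at h
        have := hmKp
        rw [abs_of_neg h] at this
        linarith only [this]
      have hpsm : 0 < eval (x - δ x) (monicPolyOfCoeffs n s) := by
        have := abs_le.mp hBm
        clear_value mK C d f
        linarith only [this.1, hfm, hdmK, hmK0]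
      have hpsp : eval (x + δ x) (monicPolyOfCoeffs n s) < 0 := by
        have := abs_le.mp hBp
        clear_value mK C d f
        linarith only [this.2, hfp, hdmK, hmK0]
      have hantips : StrictAntiOn (fun u => eval u (monicPolyOfCoeffs n s))
          (Set.Icc (x - δ x) (x + δ x)) := by
        apply strictAntiOn_of_deriv_neg (convex_Icc _ _)
          ((monicPolyOfCoeffs n s).continuous.continuousOn)
        intro u hu
        rw [interior_Icc] at hu
        rw [Polynomial.deriv]
        have h := abs_le.mp (hps'near u (Set.mem_Icc_of_Ioo hu))
        clear_value D f
        rw [habsD] at h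
        linarith only [h.2, hDneg]
      constructor
      · have hIVT := intermediate_value_Ioo' (show x - δ x ≤ x + δ x by linarith)
          ((monicPolyOfCoeffs n s).continuous.continuousOn)
        have h0 : (0:ℝ) ∈ Set.Ioo (eval (x + δ x) (monicPolyOfCoeffs n s))
            (eval (x - δ x) (monicPolyOfCoeffs n s)) := ⟨hpsp, hpsm⟩
        obtain ⟨u, hu1, hu2⟩ := hIVT h0
        exact ⟨u, hu1, hu2⟩
      · exact hantips.injOn
    · -- 0 < D
      have habsD : |D| = D := abs_of_pos hDpos
      have hf'pos : ∀ u ∈ Set.Icc (x - δ x) (x + δ x), 0 < eval u (derivative f) := by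
        intro u hu
        have h := abs_le.mp (hf'near u hu)
        clear_value D f
        rw [habsD] at h
        linarith only [h.1, hDpos]
      have hmonof : StrictMonoOn (fun u => eval u f) (Set.Icc (x - δ x) (x + δ x)) := by
        apply strictMonoOn_of_deriv_pos (convex_Icc _ _) (f.continuous.continuousOn)
        intro u hu
        rw [interior_Icc] at hu
        rw [Polynomial.deriv]
        exact hf'pos u (Set.mem_Icc_of_Ioo hu)
      have hfm : eval (x - δ x) f ≤ -mK := by
        have h := hmonof hmem_m hxmem (by linarith)
        simp only [hx0] at h
        have := hmKm
        rw [abs_of_neg h] at this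
        linarith only [this]
      have hfp : mK ≤ eval (x + δ x) f := by
        have h := hmonof hxmem hmem_p (by linarith)
        simp only [hx0] at h
        have := hmKp
        rw [abs_of_pos h] at this
        exact this
      have hpsm : eval (x - δ x) (monicPolyOfCoeffs n s) < 0 := by
        have := abs_le.mp hBm
        clear_value mK C d f
        linarith only [this.2, hfm, hdmK, hmK0]
      have hpsp : 0 < eval (x + δ x) (monicPolyOfCoeffs n s) := by
        have := abs_le.mp hBp
        clear_value mK C d f
        linarith only [this.1, hfp, hdmK, hmK0]
      have hmonops : StrictMonoOn (fun u => eval u (monicPolyOfCoeffs n s))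
          (Set.Icc (x - δ x) (x + δ x)) := by
        apply strictMonoOn_of_deriv_pos (convex_Icc _ _)
          ((monicPolyOfCoeffs n s).continuous.continuousOn)
        intro u hu
        rw [interior_Icc] at hu
        rw [Polynomial.deriv]
        have h := abs_le.mp (hps'near u (Set.mem_Icc_of_Ioo hu))
        clear_value D f
        rw [habsD] at h
        linarith only [h.1, hDpos]
      constructor
      · have hIVT := intermediate_value_Ioo (show x - δ x ≤ x + δ x by linarith)
          ((monicPolyOfCoeffs n s).continuous.continuousOn)
        have h0 : (0:ℝ) ∈ Set.Ioo (eval (x - δ x) (monicPolyOfCoeffs n s))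
            (eval (x + δ x) (monicPolyOfCoeffs n s)) := ⟨hpsm, hpsp⟩
        obtain ⟨u, hu1, hu2⟩ := hIVT h0
        exact ⟨u, hu1, hu2⟩
      · exact hmonops.injOn
  -- choose one root per interval
  have hroot : ∀ x : ℝ, ∃ u : ℝ, x ∈ F →
      u ∈ Set.Ioo (x - δ x) (x + δ x) ∧ eval u (monicPolyOfCoeffs n s) = 0 := by
    intro x
    by_cases hx : x ∈ F
    · obtain ⟨u, hu1, hu2⟩ := (hmono x hx).1
      exact ⟨u, fun _ => ⟨hu1, hu2⟩⟩
    · exact ⟨0, fun h => absurd h hx⟩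
  choose y hy using hroot
  have hset : {t : ℝ | eval t (monicPolyOfCoeffs n s) = 0} = y '' {x : ℝ | eval x f = 0} := by
    ext t
    simp only [Set.mem_setOf_eq, Set.mem_image]
    constructor
    · intro ht
      have htR := abs_lt.mp (hrootsR t ht)
      have htIcc : t ∈ Set.Icc (-R) R := Set.mem_Icc.mpr ⟨by linarith, by linarith⟩
      have htU : t ∈ ⋃ x ∈ F, Set.Ioo (x - δ x) (x + δ x) := by
        by_contra h
        exact hKs t ⟨htIcc, h⟩ ht
      simp only [Set.mem_iUnion] at htU
      obtain ⟨x, hxF, htx⟩ := htU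
      refine ⟨x, (hFmem x).mp hxF, ?_⟩
      have h1 := hy x hxF
      have heq : eval (y x) (monicPolyOfCoeffs n s) = eval t (monicPolyOfCoeffs n s) := by
        rw [h1.2, ht]
      exact ((hmono x hxF).2 (Set.mem_Icc_of_Ioo h1.1) (Set.mem_Icc_of_Ioo htx) heq)
    · rintro ⟨x, hx, rfl⟩
      exact (hy x ((hFmem x).mpr hx)).2
  have hinj : Set.InjOn y {x : ℝ | eval x f = 0} := by
    intro a ha b hb hab
    by_contra hne
    have haF : a ∈ F := (hFmem a).mpr ha
    have hbF : b ∈ F := (hFmem b).mpr hb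
    have h1 := (hy a haF).1
    have h2 := (hy b hbF).1
    rw [Set.mem_Ioo] at h1 h2
    exact hdisj a haF b hbF hne (y a)
      (le_of_lt (abs_lt.mpr ⟨by linarith, by linarith⟩))
      (by rw [hab]; exact le_of_lt (abs_lt.mpr ⟨by linarith, by linarith⟩))
  rw [hset, Set.ncard_image_of_injOn hinj]
  exact hcard
end

section
/- Let W be a 3-dimensional complex linear subspace of the space of symmetric 3×3 matrices with complex entries containing an invertible matrix. Then there exist matrices M₁, M₂, M₃ ∈ W such that every element of W of rank one is a scalar multiple of M₁, M₂ or M₃. In particular, the set of rank-one elements of W, up to scalar, is finite of cardinality at most three. -/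
open Matrix

private lemma conj_vmv (P : Matrix (Fin 3) (Fin 3) ℂ) (u : Fin 3 → ℂ) :
    P * vecMulVec u u * Pᵀ = vecMulVec (P *ᵥ u) (P *ᵥ u) := by
  ext i j
  simp only [Matrix.mul_apply, vecMulVec_apply, Matrix.transpose_apply, Matrix.mulVec,
    dotProduct, Finset.sum_mul, Finset.mul_sum]
  apply Finset.sum_congr rfl
  intro k _
  apply Finset.sum_congr rfl
  intro l _
  ring

private lemma vmv_mulVec (u x : Fin 3 → ℂ) :
    vecMulVec u u *ᵥ x = (u ⬝ᵥ x) • u := by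
  ext i
  simp only [Matrix.mulVec, dotProduct, vecMulVec_apply, Pi.smul_apply, smul_eq_mul,
    Finset.sum_mul]
  apply Finset.sum_congr rfl
  intro k _
  ring

private lemma exists_P (b : Fin 3 → (Fin 3 → ℂ)) (hb : LinearIndependent ℂ b) :
    ∃ P : Matrix (Fin 3) (Fin 3) ℂ, IsUnit P ∧ (∀ i, P *ᵥ (b i) = Pi.single i 1) ∧
      (∀ v : Fin 3 → ℂ, v = ∑ i, (P *ᵥ v) i • b i) := by
  have hcard : Fintype.card (Fin 3) = Module.finrank ℂ (Fin 3 → ℂ) := by simp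
  let B := basisOfLinearIndependentOfCardEqFinrank hb hcard
  have hB : ∀ i, B i = b i := fun i => by
    rw [coe_basisOfLinearIndependentOfCardEqFinrank]
  let f : ((Fin 3 → ℂ) →ₗ[ℂ] (Fin 3 → ℂ)) := B.equivFun.toLinearMap
  let g : ((Fin 3 → ℂ) →ₗ[ℂ] (Fin 3 → ℂ)) := B.equivFun.symm.toLinearMap
  let P := LinearMap.toMatrix' f
  have hPv : ∀ v, P *ᵥ v = B.equivFun v := by
    intro v
    have := Matrix.toLin'_toMatrix' f
    calc P *ᵥ v = Matrix.toLin' P v := by rw [Matrix.toLin'_apply]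
    _ = f v := by rw [this]
    _ = B.equivFun v := rfl
  have hunit : IsUnit P := by
    refine IsUnit.of_mul_eq_one (LinearMap.toMatrix' g) ?_
    rw [← LinearMap.toMatrix'_comp]
    have : f.comp g = LinearMap.id := by
      ext v
      simp [f, g]
    rw [this, LinearMap.toMatrix'_id]
  refine ⟨P, hunit, fun i => ?_, fun v => ?_⟩
  · rw [hPv, ← hB i]
    ext j
    simp [Module.Basis.equivFun_self, Pi.single_apply, eq_comm]
  · rw [hPv]
    conv_lhs => rw [← B.equivFun.symm_apply_apply v]
    rw [Module.Basis.equivFun_symm_apply]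
    exact Finset.sum_congr rfl fun i _ => by rw [hB]

private lemma rank_one_decomp {M : Matrix (Fin 3) (Fin 3) ℂ} (hs : M.IsSymm) (hr : M.rank = 1) :
    ∃ (c : ℂ) (u : Fin 3 → ℂ), c ≠ 0 ∧ u ≠ 0 ∧ M = c • vecMulVec u u := by
  have h := hr
  rw [Matrix.rank, finrank_eq_one_iff'] at h
  obtain ⟨v, hv0, hv⟩ := h
  set u : Fin 3 → ℂ := (v : Fin 3 → ℂ) with hu
  have hu0 : u ≠ 0 := fun h => hv0 (Subtype.ext h)
  have hcol : ∀ j, ∃ cj : ℂ, cj • u = fun i => M i j := by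
    intro j
    have hmem : (fun i => M i j) ∈ LinearMap.range M.mulVecLin := by
      refine ⟨Pi.single j 1, ?_⟩
      simp [Matrix.mulVecLin_apply]
      rfl
    obtain ⟨cj, hcj⟩ := hv ⟨_, hmem⟩
    exact ⟨cj, congrArg Subtype.val hcj⟩
  choose w hw using hcol
  have hMe : ∀ i j, M i j = w j * u i := by
    intro i j
    rw [← congrFun (hw j) i]
    simp [mul_comm]
  have hsym : ∀ i j, M i j = M j i := by
    intro i j
    conv_lhs => rw [← hs]
    rfl
  obtain ⟨k, hk⟩ : ∃ k, u k ≠ 0 := Function.ne_iff.mp hu0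
  refine ⟨w k / u k, u, ?_, hu0, ?_⟩
  · intro hc
    have hwz : ∀ j, w j = 0 := by
      intro j
      have h1 : w j * u k = w k * u j := by rw [← hMe k j, hsym, hMe]
      have h2 : w k = 0 := by
        rcases div_eq_zero_iff.mp hc with h | h
        · exact h
        · exact absurd h hk
      rw [h2, zero_mul] at h1
      rcases mul_eq_zero.mp h1 with h | h
      · exact h
      · exact absurd h hk
    have hM0 : M = 0 := by
      ext i j
      simp [hMe, hwz]
    rw [hM0] at hr
    simp at hr
  · ext i j
    have h1 : w j * u k = w k * u j := by rw [← hMe k j, hsym, hMe]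
    have hwj : w j = w k / u k * u j := by
      field_simp
      linear_combination h1
    rw [Matrix.smul_apply, vecMulVec_apply, hMe, hwj, smul_eq_mul]
    ring

private lemma span_three {W : Submodule ℂ (Matrix (Fin 3) (Fin 3) ℂ)}
    (hdim : Module.finrank ℂ W = 3) (Q : Fin 3 → Matrix (Fin 3) (Fin 3) ℂ)
    (hQ : ∀ i, Q i ∈ W) (hind : LinearIndependent ℂ Q)
    {N : Matrix (Fin 3) (Fin 3) ℂ} (hN : N ∈ W) :
    ∃ g : Fin 3 → ℂ, N = ∑ i, g i • Q i := by
  let q : Fin 3 → W := fun i => ⟨Q i, hQ i⟩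
  have hq : LinearIndependent ℂ q := by
    apply LinearIndependent.of_comp W.subtype
    convert hind
    rfl
  have hspan : Submodule.span ℂ (Set.range q) = ⊤ :=
    hq.span_eq_top_of_card_eq_finrank (by simp [hdim])
  have hmem : (⟨N, hN⟩ : W) ∈ Submodule.span ℂ (Set.range q) := by
    rw [hspan]; trivial
  rw [Submodule.mem_span_range_iff_exists_fun] at hmem
  obtain ⟨g, hg⟩ := hmem
  refine ⟨g, ?_⟩
  have := congrArg (Subtype.val) hg
  push_cast at this
  rw [← this]

private lemma not_prop_vec {M N : Matrix (Fin 3) (Fin 3) ℂ} {cM cN : ℂ} {u v : Fin 3 → ℂ}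
    (hM : M = cM • vecMulVec u u) (hN : N = cN • vecMulVec v v)
    (hcN : cN ≠ 0) (h : ¬ ∃ c : ℂ, M = c • N) : ∀ d : ℂ, u ≠ d • v := by
  intro d hd
  apply h
  refine ⟨cM * d ^ 2 / cN, ?_⟩
  rw [hM, hN, hd]
  ext i j
  simp only [Matrix.smul_apply, vecMulVec_apply, Pi.smul_apply, smul_eq_mul]
  field_simp

private lemma flip_ne {u v : Fin 3 → ℂ} (hv : v ≠ 0) (h : ∀ d : ℂ, u ≠ d • v) :
    ∀ d : ℂ, v ≠ d • u := by
  intro d hd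
  by_cases hd0 : d = 0
  · rw [hd0, zero_smul] at hd
    exact hv hd
  · apply h d⁻¹
    rw [hd, smul_smul, inv_mul_cancel₀ hd0, one_smul]

private lemma caseA {W : Submodule ℂ (Matrix (Fin 3) (Fin 3) ℂ)}
    (hdim : Module.finrank ℂ W = 3) (b : Fin 3 → (Fin 3 → ℂ))
    (hb : LinearIndependent ℂ b)
    (hQ : ∀ i, vecMulVec (b i) (b i) ∈ W)
    (u : Fin 3 → ℂ) (hu : vecMulVec u u ∈ W)
    (hind : ∀ (i : Fin 3) (c : ℂ), u ≠ c • b i) : False := by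
  obtain ⟨P, hP, hPb, hPrec⟩ := exists_P b hb
  set Q : Fin 3 → Matrix (Fin 3) (Fin 3) ℂ := fun i => vecMulVec (b i) (b i) with hQdef
  set L : Matrix (Fin 3) (Fin 3) ℂ →ₗ[ℂ] Matrix (Fin 3) (Fin 3) ℂ :=
    (LinearMap.mulLeft ℂ P).comp (LinearMap.mulRight ℂ Pᵀ) with hLdef
  have hLQ : ∀ i, L (Q i) = vecMulVec (Pi.single i 1) (Pi.single i 1) := by
    intro i
    simp only [hLdef, LinearMap.comp_apply, LinearMap.mulRight_apply, LinearMap.mulLeft_apply]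
    rw [← Matrix.mul_assoc, conj_vmv, hPb]
  have hQind : LinearIndependent ℂ Q := by
    apply LinearIndependent.of_comp L
    have heq : L ∘ Q = fun i => vecMulVec (Pi.single i (1:ℂ)) (Pi.single i 1) := by
      funext i
      exact hLQ i
    rw [heq, Fintype.linearIndependent_iff]
    intro g hg i
    have h := congrFun (congrFun hg i) i
    simp [Matrix.sum_apply, vecMulVec_apply, Pi.single_apply] at h
    exact h
  obtain ⟨g, hgu⟩ := span_three hdim Q hQ hQind hu
  set w : Fin 3 → ℂ := P *ᵥ u with hwdef
  have hPQ : ∀ i, P * Q i * Pᵀ = vecMulVec (Pi.single i (1:ℂ)) (Pi.single i 1) := by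
    intro i
    show P * vecMulVec (b i) (b i) * Pᵀ = _
    rw [conj_vmv, hPb]
  have hw : vecMulVec w w = ∑ i, g i • vecMulVec (Pi.single i (1:ℂ)) (Pi.single i 1) := by
    rw [hwdef, ← conj_vmv, hgu]
    simp only [Matrix.mul_sum, Matrix.sum_mul, Matrix.mul_smul, Matrix.smul_mul]
    exact Finset.sum_congr rfl fun i _ => by rw [hPQ i]
  have hoff : ∀ i j : Fin 3, i ≠ j → w i * w j = 0 := by
    intro i j hij
    have h := congrFun (congrFun hw i) j
    simp [Matrix.sum_apply, vecMulVec_apply, Pi.single_apply, hij] at h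
    rcases h with h | h <;> simp [h]
  have hsum : u = w 0 • b 0 + w 1 • b 1 + w 2 • b 2 := by
    conv_lhs => rw [hPrec u]
    rw [Fin.sum_univ_three]
  rcases mul_eq_zero.mp (hoff 0 1 (by decide)) with h | h
  · rcases mul_eq_zero.mp (hoff 1 2 (by decide)) with h' | h'
    · exact hind 2 (w 2) (by rw [hsum, h, h']; simp)
    · exact hind 1 (w 1) (by rw [hsum, h, h']; simp)
  · rcases mul_eq_zero.mp (hoff 0 2 (by decide)) with h' | h'
    · exact hind 2 (w 2) (by rw [hsum, h, h']; simp)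
    · exact hind 0 (w 0) (by rw [hsum, h, h']; simp)

private lemma caseB {W : Submodule ℂ (Matrix (Fin 3) (Fin 3) ℂ)}
    (hdim : Module.finrank ℂ W = 3) (hunit : ∃ M ∈ W, IsUnit M)
    (b₁ b₂ : Fin 3 → ℂ) (hb : LinearIndependent ℂ ![b₁, b₂])
    (hQ1 : vecMulVec b₁ b₁ ∈ W) (hQ2 : vecMulVec b₂ b₂ ∈ W)
    (a c : ℂ) (ha : a ≠ 0) (hc : c ≠ 0)
    (hQ3 : vecMulVec (a • b₁ + c • b₂) (a • b₁ + c • b₂) ∈ W) : False := by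
  set u₃ : Fin 3 → ℂ := a • b₁ + c • b₂ with hu₃
  obtain ⟨b₅, hb₅⟩ : ∃ x : Fin 3 → ℂ, x ∉ Submodule.span ℂ (Set.range ![b₁, b₂]) := by
    by_contra hcon
    push_neg at hcon
    have htop : Submodule.span ℂ (Set.range ![b₁, b₂]) = ⊤ := by
      rw [Submodule.eq_top_iff']
      exact hcon
    have h1 : Module.finrank ℂ (Submodule.span ℂ (Set.range ![b₁, b₂])) ≤ Fintype.card (Fin 2) :=
      finrank_range_le_card (R := ℂ) ![b₁, b₂]
    rw [Fintype.card_fin] at h1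
    rw [htop] at h1
    rw [finrank_top] at h1
    have : Module.finrank ℂ (Fin 3 → ℂ) = 3 := by simp
    omega
  have hd : LinearIndependent ℂ ![b₅, b₁, b₂] := by
    have := hb.fin_cons (x := b₅) hb₅
    exact this
  obtain ⟨P, hP, hPb, hPrec⟩ := exists_P ![b₅, b₁, b₂] hd
  have hPb1 : P *ᵥ b₁ = Pi.single 1 1 := hPb 1
  have hPb2 : P *ᵥ b₂ = Pi.single 2 1 := hPb 2
  have hw : P *ᵥ u₃ = a • (Pi.single 1 1 : Fin 3 → ℂ) + c • (Pi.single 2 1 : Fin 3 → ℂ) := by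
    rw [hu₃, Matrix.mulVec_add, Matrix.mulVec_smul, Matrix.mulVec_smul, hPb1, hPb2]
  set Q : Fin 3 → Matrix (Fin 3) (Fin 3) ℂ :=
    ![vecMulVec b₁ b₁, vecMulVec b₂ b₂, vecMulVec u₃ u₃] with hQdef
  have hQmem : ∀ i, Q i ∈ W := by
    intro i
    fin_cases i <;> assumption
  set L : Matrix (Fin 3) (Fin 3) ℂ →ₗ[ℂ] Matrix (Fin 3) (Fin 3) ℂ :=
    (LinearMap.mulLeft ℂ P).comp (LinearMap.mulRight ℂ Pᵀ) with hLdef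
  have hL : ∀ M, L M = P * M * Pᵀ := by
    intro M
    simp [hLdef, Matrix.mul_assoc]
  have hQind : LinearIndependent ℂ Q := by
    apply LinearIndependent.of_comp L
    rw [Fintype.linearIndependent_iff]
    intro g hg
    have hg' : g 0 • vecMulVec (Pi.single 1 (1:ℂ) : Fin 3 → ℂ) (Pi.single 1 1 : Fin 3 → ℂ)
        + g 1 • vecMulVec (Pi.single 2 (1:ℂ) : Fin 3 → ℂ) (Pi.single 2 1 : Fin 3 → ℂ)
        + g 2 • vecMulVec (a • (Pi.single 1 1 : Fin 3 → ℂ) + c • (Pi.single 2 1 : Fin 3 → ℂ))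
            (a • (Pi.single 1 1 : Fin 3 → ℂ) + c • (Pi.single 2 1 : Fin 3 → ℂ)) = 0 := by
      have := hg
      rw [Fin.sum_univ_three] at this
      simpa [Function.comp, hL, hQdef, conj_vmv, hPb1, hPb2, hw] using this
    have h12 := congrFun (congrFun hg' 1) 2
    simp [vecMulVec_apply, Pi.single_apply] at h12
    have hg2 : g 2 = 0 := by
      rcases h12 with h | h
      · exact h
      · rcases h with h | h
        · exact absurd h ha
        · exact absurd h hc
    have h11 := congrFun (congrFun hg' 1) 1
    have h22 := congrFun (congrFun hg' 2) 2
    simp [vecMulVec_apply, Pi.single_apply, hg2] at h11 h22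
    intro i
    fin_cases i <;> simpa
  obtain ⟨A, hAW, hA⟩ := hunit
  obtain ⟨g, hgA⟩ := span_three hdim Q hQmem hQind hAW
  set N : Matrix (Fin 2) (Fin 3) ℂ := ![b₁, b₂] with hNdef
  obtain ⟨x, hx0, hx1, hx2⟩ : ∃ x : Fin 3 → ℂ, x ≠ 0 ∧ b₁ ⬝ᵥ x = 0 ∧ b₂ ⬝ᵥ x = 0 := by
    have hni : ¬ Function.Injective N.mulVecLin := by
      intro hinj
      have := LinearMap.finrank_le_finrank_of_injective hinj
      simp at this
    obtain ⟨y, z, hyz, hne⟩ := Function.not_injective_iff.mp hni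
    refine ⟨y - z, sub_ne_zero_of_ne hne, ?_, ?_⟩
    · have h : N *ᵥ (y - z) = 0 := by
        rw [Matrix.mulVec_sub]
        simp only [Matrix.mulVecLin_apply] at hyz
        rw [hyz, sub_self]
      have := congrFun h 0
      simpa [Matrix.mulVec, hNdef] using this
    · have h : N *ᵥ (y - z) = 0 := by
        rw [Matrix.mulVec_sub]
        simp only [Matrix.mulVecLin_apply] at hyz
        rw [hyz, sub_self]
      have := congrFun h 1
      simpa [Matrix.mulVec, hNdef] using this
  have hu₃x : u₃ ⬝ᵥ x = 0 := by
    rw [hu₃]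
    simp [add_dotProduct, smul_dotProduct, hx1, hx2]
  have hAx : A *ᵥ x = 0 := by
    rw [hgA]
    rw [Fin.sum_univ_three]
    simp only [Matrix.add_mulVec, Matrix.smul_mulVec]
    show g 0 • (vecMulVec b₁ b₁ *ᵥ x) + g 1 • (vecMulVec b₂ b₂ *ᵥ x)
      + g 2 • (vecMulVec u₃ u₃ *ᵥ x) = 0
    rw [vmv_mulVec, vmv_mulVec, vmv_mulVec, hx1, hx2, hu₃x]
    simp
  obtain ⟨v, hv⟩ := hA
  apply hx0
  calc x = (1 : Matrix (Fin 3) (Fin 3) ℂ) *ᵥ x := by simp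
  _ = ((↑v⁻¹ : Matrix (Fin 3) (Fin 3) ℂ) * A) *ᵥ x := by rw [← hv, Units.inv_mul]
  _ = (↑v⁻¹ : Matrix (Fin 3) (Fin 3) ℂ) *ᵥ (A *ᵥ x) := by rw [Matrix.mulVec_mulVec]
  _ = 0 := by rw [hAx]; simp

private lemma key {W : Submodule ℂ (Matrix (Fin 3) (Fin 3) ℂ)}
    (hdim : Module.finrank ℂ W = 3) (hunit : ∃ M ∈ W, IsUnit M)
    (u₀ u₁ u₂ u₃ : Fin 3 → ℂ)
    (hQ0 : vecMulVec u₀ u₀ ∈ W) (hQ1 : vecMulVec u₁ u₁ ∈ W)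
    (hQ2 : vecMulVec u₂ u₂ ∈ W) (hQ3 : vecMulVec u₃ u₃ ∈ W)
    (hnz1 : u₁ ≠ 0)
    (p01 : ∀ d : ℂ, u₀ ≠ d • u₁)
    (p20 : ∀ d : ℂ, u₂ ≠ d • u₀) (p21 : ∀ d : ℂ, u₂ ≠ d • u₁)
    (p30 : ∀ d : ℂ, u₃ ≠ d • u₀) (p31 : ∀ d : ℂ, u₃ ≠ d • u₁)
    (p32 : ∀ d : ℂ, u₃ ≠ d • u₂) : False := by
  have h01 : LinearIndependent ℂ ![u₀, u₁] := by
    rw [linearIndependent_fin2]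
    constructor
    · simpa using hnz1
    · intro a h
      exact p01 a (by simpa using h.symm)
  by_cases hmem : u₂ ∈ Submodule.span ℂ (Set.range ![u₀, u₁])
  · rw [Submodule.mem_span_range_iff_exists_fun] at hmem
    obtain ⟨g, hg⟩ := hmem
    rw [Fin.sum_univ_two, Matrix.cons_val_zero, Matrix.cons_val_one, Matrix.cons_val_zero] at hg
    have ha : g 0 ≠ 0 := by
      intro h0
      apply p21 (g 1)
      rw [← hg, h0, zero_smul, zero_add]
    have hc : g 1 ≠ 0 := by
      intro h1
      apply p20 (g 0)
      rw [← hg, h1, zero_smul, add_zero]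
    apply caseB hdim hunit u₀ u₁ h01 hQ0 hQ1 (g 0) (g 1) ha hc
    rw [hg]
    exact hQ2
  · have hd : LinearIndependent ℂ ![u₂, u₀, u₁] := by
      have := h01.fin_cons (x := u₂) hmem
      exact this
    apply caseA hdim ![u₂, u₀, u₁] hd ?_ u₃ hQ3 ?_
    · intro i
      fin_cases i
      · exact hQ2
      · exact hQ0
      · exact hQ1
    · intro i d
      fin_cases i
      · exact p32 d
      · exact p30 d
      · exact p31 d



/-- If `W` is a 3-dimensional complex subspace of symmetric 3×3
complex matrices containing an invertible matrix, then there are `M₁, M₂, M₃ ∈ W`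
such that every rank-one element of `W` is a scalar multiple of one of them. -/
theorem stmt_9 (W : Submodule ℂ (Matrix (Fin 3) (Fin 3) ℂ))
    (hsymm : ∀ M ∈ W, M.IsSymm)
    (hdim : Module.finrank ℂ W = 3)
    (hunit : ∃ M ∈ W, IsUnit M) :
    ∃ M₁ M₂ M₃ : Matrix (Fin 3) (Fin 3) ℂ,
      M₁ ∈ W ∧ M₂ ∈ W ∧ M₃ ∈ W ∧
      ∀ M ∈ W, M.rank = 1 →
        ∃ c : ℂ, M = c • M₁ ∨ M = c • M₂ ∨ M = c • M₃ := by
  classical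
  by_cases h1 : ∃ M, M ∈ W ∧ M.rank = 1
  on_goal 2 =>
    refine ⟨0, 0, 0, W.zero_mem, W.zero_mem, W.zero_mem, ?_⟩
    intro M hM hr
    exact absurd ⟨M, hM, hr⟩ h1
  obtain ⟨M₁, hW1, hr1⟩ := h1
  by_cases h2 : ∃ M, M ∈ W ∧ M.rank = 1 ∧ ¬∃ c : ℂ, M = c • M₁
  on_goal 2 =>
    refine ⟨M₁, M₁, M₁, hW1, hW1, hW1, ?_⟩
    intro M hM hr
    by_cases hc : ∃ c : ℂ, M = c • M₁
    · obtain ⟨c, hc⟩ := hc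
      exact ⟨c, Or.inl hc⟩
    · exact absurd ⟨M, hM, hr, hc⟩ h2
  obtain ⟨M₂, hW2, hr2, hn21⟩ := h2
  by_cases h3 : ∃ M, M ∈ W ∧ M.rank = 1 ∧ (¬∃ c : ℂ, M = c • M₁) ∧ (¬∃ c : ℂ, M = c • M₂)
  on_goal 2 =>
    refine ⟨M₁, M₂, M₂, hW1, hW2, hW2, ?_⟩
    intro M hM hr
    by_cases hc1 : ∃ c : ℂ, M = c • M₁
    · obtain ⟨c, hc⟩ := hc1
      exact ⟨c, Or.inl hc⟩
    by_cases hc2 : ∃ c : ℂ, M = c • M₂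
    · obtain ⟨c, hc⟩ := hc2
      exact ⟨c, Or.inr (Or.inl hc)⟩
    · exact absurd ⟨M, hM, hr, hc1, hc2⟩ h3
  obtain ⟨M₃, hW3, hr3, hn31, hn32⟩ := h3
  refine ⟨M₁, M₂, M₃, hW1, hW2, hW3, ?_⟩
  intro M hM hr
  by_contra hcon
  push_neg at hcon
  have hnM1 : ¬∃ c : ℂ, M = c • M₁ := fun ⟨c, hc⟩ => (hcon c).1 hc
  have hnM2 : ¬∃ c : ℂ, M = c • M₂ := fun ⟨c, hc⟩ => (hcon c).2.1 hc
  have hnM3 : ¬∃ c : ℂ, M = c • M₃ := fun ⟨c, hc⟩ => (hcon c).2.2 hc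
  -- decompose all four
  obtain ⟨c₁, u₁, hc1, hu1, hd1⟩ := rank_one_decomp (hsymm M₁ hW1) hr1
  obtain ⟨c₂, u₂, hc2, hu2, hd2⟩ := rank_one_decomp (hsymm M₂ hW2) hr2
  obtain ⟨c₃, u₃, hc3, hu3, hd3⟩ := rank_one_decomp (hsymm M₃ hW3) hr3
  obtain ⟨c₄, u₄, hc4, hu4, hd4⟩ := rank_one_decomp (hsymm M hM) hr
  have hmem : ∀ (c : ℂ) (u : Fin 3 → ℂ) (N : Matrix (Fin 3) (Fin 3) ℂ), c ≠ 0 → N ∈ W →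
      N = c • vecMulVec u u → vecMulVec u u ∈ W := by
    intro c u N hc hN hdN
    have : vecMulVec u u = c⁻¹ • N := by
      rw [hdN, smul_smul, inv_mul_cancel₀ hc, one_smul]
    rw [this]
    exact W.smul_mem _ hN
  have hQ1 := hmem c₁ u₁ M₁ hc1 hW1 hd1
  have hQ2 := hmem c₂ u₂ M₂ hc2 hW2 hd2
  have hQ3 := hmem c₃ u₃ M₃ hc3 hW3 hd3
  have hQ4 := hmem c₄ u₄ M hc4 hM hd4
  have p10 : ∀ d : ℂ, u₂ ≠ d • u₁ := not_prop_vec hd2 hd1 hc1 hn21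
  have p01 : ∀ d : ℂ, u₁ ≠ d • u₂ := flip_ne hu1 p10
  have p20 : ∀ d : ℂ, u₃ ≠ d • u₁ := not_prop_vec hd3 hd1 hc1 hn31
  have p21 : ∀ d : ℂ, u₃ ≠ d • u₂ := not_prop_vec hd3 hd2 hc2 hn32
  have p30 : ∀ d : ℂ, u₄ ≠ d • u₁ := not_prop_vec hd4 hd1 hc1 hnM1
  have p31 : ∀ d : ℂ, u₄ ≠ d • u₂ := not_prop_vec hd4 hd2 hc2 hnM2
  have p32 : ∀ d : ℂ, u₄ ≠ d • u₃ := not_prop_vec hd4 hd3 hc3 hnM3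
  exact key hdim hunit u₁ u₂ u₃ u₄ hQ1 hQ2 hQ3 hQ4 hu2 p01 p20 p21 p30 p31 p32
end

section
/- Let W be the complex linear span, inside symmetric 4×4 complex matrices, of the four matrices corresponding to the quadratic forms x₀², x₀x₁, x₁², x₂x₃ on ℂ⁴ (namely E₀₀, E₀₁+E₁₀, E₁₁, E₂₃+E₃₂, where E_{ij} is the matrix unit). Then W is 4-dimensional, W contains an invertible matrix, and for every vector v ∈ ℂ⁴ there exists M ∈ W with M ≠ 0 and M · v = 0. -/
open Matrix

/-- The span of the symmetric matrices of the quadratic forms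
`x₀², x₀x₁, x₁², x₂x₃` on `ℂ⁴`. -/
noncomputable def webW : Submodule ℂ (Matrix (Fin 4) (Fin 4) ℂ) :=
  Submodule.span ℂ
    {single 0 0 (1 : ℂ),
     single 0 1 (1 : ℂ) + single 1 0 (1 : ℂ),
     single 1 1 (1 : ℂ),
     single 2 3 (1 : ℂ) + single 3 2 (1 : ℂ)}

private noncomputable def webF : Fin 4 → Matrix (Fin 4) (Fin 4) ℂ :=
  ![single 0 0 (1 : ℂ),
    single 0 1 (1 : ℂ) + single 1 0 (1 : ℂ),
    single 1 1 (1 : ℂ),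
    single 2 3 (1 : ℂ) + single 3 2 (1 : ℂ)]

private lemma webW_eq : webW = Submodule.span ℂ (Set.range webF) := by
  rw [webW, webF]
  congr 1
  ext x
  simp [Matrix.range_cons, Matrix.range_empty]
  tauto

private lemma webF_li : LinearIndependent ℂ webF := by
  rw [Fintype.linearIndependent_iff]
  intro g h i
  have h00 := congrFun (congrFun h 0) 0
  have h01 := congrFun (congrFun h 0) 1
  have h11 := congrFun (congrFun h 1) 1
  have h23 := congrFun (congrFun h 2) 3
  simp [webF, Fin.sum_univ_four, Matrix.single, Matrix.add_apply] at h00 h01 h11 h23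
  fin_cases i <;> assumption

/-- the web spanned by `x₀², x₀x₁, x₁², x₂x₃` is 4-dimensional,
contains an invertible matrix, and every `v ∈ ℂ⁴` is in the kernel of some
nonzero member of the web. -/
theorem stmt_11 :
    Module.finrank ℂ webW = 4 ∧
    (∃ M ∈ webW, IsUnit M) ∧
    ∀ v : Fin 4 → ℂ, ∃ M ∈ webW, M ≠ 0 ∧ M.mulVec v = 0 := by
  have hmem : ∀ i, webF i ∈ webW := by
    intro i
    rw [webW_eq]
    exact Submodule.subset_span ⟨i, rfl⟩
  refine ⟨?_, ?_, ?_⟩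
  · rw [webW_eq]
    simpa using finrank_span_eq_card webF_li
  · refine ⟨webF 0 + webF 2 + webF 3, ?_, ?_⟩
    · exact add_mem (add_mem (hmem 0) (hmem 2)) (hmem 3)
    · refine @isUnit_of_invertible _ _ _ (invertibleOfRightInverse _ (webF 0 + webF 2 + webF 3) ?_)
      ext i j
      fin_cases i <;> fin_cases j <;>
        simp [webF, Matrix.single, Matrix.mul_apply, Fin.sum_univ_four,
          Matrix.add_apply, Matrix.one_apply]
  · intro v
    by_cases ha : v 0 = 0 ∧ v 1 = 0
    · refine ⟨webF 0, hmem 0, ?_, ?_⟩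
      · intro h
        have := congrFun (congrFun h 0) 0
        simp [webF, Matrix.single] at this
      · funext k
        fin_cases k <;>
          simp [webF, mulVec, dotProduct, Fin.sum_univ_four, Matrix.single, ha.1]
    · refine ⟨(v 1)^2 • webF 0 + (-(v 0 * v 1)) • webF 1 + (v 0)^2 • webF 2,
        add_mem (add_mem (Submodule.smul_mem _ _ (hmem 0))
          (Submodule.smul_mem _ _ (hmem 1))) (Submodule.smul_mem _ _ (hmem 2)), ?_, ?_⟩
      · intro h
        rw [not_and_or] at ha
        rcases ha with ha | ha
        · have := congrFun (congrFun h 1) 1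
          simp [webF, Matrix.single, Matrix.add_apply, Matrix.smul_apply] at this
          exact ha this
        · have := congrFun (congrFun h 0) 0
          simp [webF, Matrix.single, Matrix.add_apply, Matrix.smul_apply] at this
          exact ha this
      · funext k
        fin_cases k <;>
          simp [webF, mulVec, dotProduct, Fin.sum_univ_four, Matrix.single,
            Matrix.add_apply, Matrix.smul_apply] <;> ring
end
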